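/- arXiv:2507.21180 — 5 statements merged into one kernel-verified Lean document; each statement's English description precedes it below -/
import Mathlib

section
/- Absolute simultaneity S is not a concept of relativistic spacetime, i.e., the binary relation S on ℝ⁴ is not first-order definable (without parameters) in the structure RelST = ⟨ℝ⁴, λ⟩; consequently Con(RelST) ⊊ Con(LClassST). -/
open FirstOrder Language Function Set

/-- Spacetime points: elements of ℝ⁴. -/
abbrev Pt : Type := Fin 4 → ℝ

/-- Lightlike relatedness λ. -/
def lightlike (p q : Pt) : Prop :=
  (p 0 - q 0) ^ 2 = (p 1 - q 1) ^ 2 + (p 2 - q 2) ^ 2 + (p 3 - q 3) ^ 2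

/-- Absolute simultaneity S. -/
def simul (p q : Pt) : Prop := p 0 = q 0

/-- The language of relativistic spacetime: one binary relation symbol. -/
def relLang : Language :=
  { Functions := fun _ => Empty, Relations := fun m => PLift (m = 2) }

/-- Relativistic spacetime RelST = ⟨ℝ⁴, λ⟩. -/
def relStr : relLang.Structure Pt where
  funMap := fun f => f.elim
  RelMap := fun r v =>
    lightlike (v (Fin.cast r.down.symm 0)) (v (Fin.cast r.down.symm 1))

/-- The language of late classical spacetime: two binary relation symbols. -/
def classLang : Language :=
  { Functions := fun _ => Empty, Relations := fun m => PLift (m = 2) ⊕ PLift (m = 2) }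

/-- Late classical spacetime LClassST = ⟨ℝ⁴, S, λ⟩. -/
def classStr : classLang.Structure Pt where
  funMap := fun f => f.elim
  RelMap := fun r v =>
    match r with
    | .inl ⟨h⟩ => simul (v (Fin.cast h.symm 0)) (v (Fin.cast h.symm 1))
    | .inr ⟨h⟩ => lightlike (v (Fin.cast h.symm 0)) (v (Fin.cast h.symm 1))

/-- `ConOf L str R` : the `n`-ary relation `R` on ℝ⁴ is a concept of the structure
`⟨ℝ⁴; str⟩`, i.e. first-order definable without parameters. -/
def ConOf (L : Language) (str : L.Structure Pt) {n : ℕ} (R : Set (Fin n → Pt)) : Prop :=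
  letI := str
  (∅ : Set Pt).Definable L R


/-- Absolute simultaneity as a binary concept (a set of 2-tuples of points). -/
def simulSet : Set (Fin 2 → Pt) := {v | simul (v 0) (v 1)}

/-! ### Auxiliary: a Lorentz boost automorphism of `⟨ℝ⁴, λ⟩`. -/

/-- A Lorentz boost (v = 3/5) as a map of ℝ⁴. -/
noncomputable def boostFun (p : Pt) : Pt :=
  ![(5 * p 0 - 3 * p 1) / 4, (5 * p 1 - 3 * p 0) / 4, p 2, p 3]

noncomputable def boostInv (p : Pt) : Pt :=
  ![(5 * p 0 + 3 * p 1) / 4, (5 * p 1 + 3 * p 0) / 4, p 2, p 3]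

lemma boost_lightlike (p q : Pt) :
    lightlike (boostFun p) (boostFun q) ↔ lightlike p q := by
  simp only [lightlike, boostFun]
  norm_num [Fin.isValue, Matrix.cons_val_zero, Matrix.cons_val_one, Matrix.cons_val_two, Matrix.cons_val_three]
  constructor <;> intro h <;> nlinarith [h]

noncomputable def boostEquiv : Pt ≃ Pt where
  toFun := boostFun
  invFun := boostInv
  left_inv p := by
    funext i
    fin_cases i <;> simp [boostFun, boostInv] <;> ring
  right_inv p := by
    funext i
    fin_cases i <;> simp [boostFun, boostInv] <;> ring

/-- The boost as an automorphism of RelST. -/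
noncomputable def boostAut : letI := relStr; (relLang.Equiv Pt Pt) :=
  letI := relStr
  { toEquiv := boostEquiv
    map_fun' := fun f => f.elim
    map_rel' := by
      rintro n ⟨rfl⟩ x
      exact boost_lightlike (x 0) (x 1) }

/-- The language hom embedding relLang into classLang. -/
def relToClass : relLang →ᴸ classLang where
  onFunction := fun _ f => f
  onRelation := fun _ r => Sum.inr r

instance relToClass_exp : letI := relStr; letI := classStr;
    relToClass.IsExpansionOn Pt :=
  letI := relStr; letI := classStr
  { map_onFunction := fun f => f.elim
    map_onRelation := by rintro n ⟨rfl⟩ x; rfl }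

/-- Absolute simultaneity `S` is not a concept of relativistic spacetime;
consequently `Con(RelST) ⊊ Con(LClassST)`. -/
theorem simul_not_concept_of_relST :
    ¬ ConOf relLang relStr simulSet ∧
    ((∀ (m : ℕ) (R : Set (Fin m → Pt)), ConOf relLang relStr R → ConOf classLang classStr R) ∧
      (∃ (m : ℕ) (R : Set (Fin m → Pt)),
        ConOf classLang classStr R ∧ ¬ ConOf relLang relStr R)) := by
  letI := relStr
  letI := classStr
  have hnot : ¬ ConOf relLang relStr simulSet := by
    intro h
    rw [ConOf, Set.empty_definable_iff] at h
    obtain ⟨φ, hφ⟩ := h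
    set v : Fin 2 → Pt := ![fun _ => 0, ![0, 1, 0, 0] ] with hv
    have h1 : v ∈ simulSet := by
      simp [simulSet, simul, hv]
    have h2 : (boostEquiv ∘ v) ∈ simulSet := by
      rw [hφ] at h1 ⊢
      have := StrongHomClass.realize_formula (M := Pt) (N := Pt) boostAut φ (v := v)
      exact Set.mem_setOf.2 (this.2 h1)
    simp only [simulSet, simul, Set.mem_setOf_eq, hv, Function.comp] at h2
    norm_num [boostEquiv, boostFun] at h2
  refine ⟨hnot, fun m R hR => hR.map_expansion relToClass, 2, simulSet, ?_, hnot⟩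
  rw [ConOf, Set.empty_definable_iff]
  refine ⟨Relations.formula₂ (Sum.inl ⟨rfl⟩) (Term.var 0) (Term.var 1), ?_⟩
  ext v
  simp only [simulSet, Set.mem_setOf_eq]
  erw [Formula.realize_rel₂]
  rfl
end

section
/- There exists a bijection f : ℝ⁴ → ℝ⁴ that respects lightlike relatedness (p λ q ⟺ f(p) λ f(q) for all p, q) but does not respect absolute simultaneity (there exist p, q with p S q but not f(p) S f(q)). In particular, any Lorentz boost with nonzero speed (taking c = 1) is such a map. -/
/-- There is a bijection of ℝ⁴ that respects lightlike relatedness but does not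
respect absolute simultaneity (e.g. any Lorentz boost with nonzero speed). -/
theorem exists_bijection_respecting_lightlike_not_simul :
    ∃ f : Pt → Pt, Function.Bijective f ∧
      (∀ p q : Pt, lightlike p q ↔ lightlike (f p) (f q)) ∧
      (∃ p q : Pt, simul p q ∧ ¬ simul (f p) (f q)) := by
  refine ⟨fun p i => if i = 0 then (5/4) * p 0 - (3/4) * p 1
      else if i = 1 then (5/4) * p 1 - (3/4) * p 0 else p i, ?_, ?_, ?_⟩
  · rw [Function.bijective_iff_has_inverse]
    refine ⟨fun p i => if i = 0 then (5/4) * p 0 + (3/4) * p 1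
      else if i = 1 then (5/4) * p 1 + (3/4) * p 0 else p i, ?_, ?_⟩ <;>
      intro x <;> funext i <;> fin_cases i <;> simp <;> ring
  · intro p q
    unfold lightlike
    simp only [show ((1:Fin 4) = 0) = False by simp, show ((2:Fin 4) = 0) = False by simp,
      show ((3:Fin 4) = 0) = False by simp, show ((2:Fin 4) = 1) = False by decide,
      show ((3:Fin 4) = 1) = False by decide, if_true, if_false, ite_true, ite_false]
    constructor <;> intro h <;> linear_combination h
  · refine ⟨fun _ => 0, fun i => if i = 1 then 1 else 0, rfl, ?_⟩
    unfold simul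
    norm_num
end

section
/- (Alexandrov–Zeeman) The automorphism group of relativistic spacetime equals the set of compositions of scalings with Poincaré transformations: a bijection f : ℝ⁴ → ℝ⁴ respects lightlike relatedness λ if and only if f = D ∘ P for some scaling D and Poincaré transformation P. -/
/-- Squared Minkowski length. -/
def sqMink (p : Pt) : ℝ := p 0 ^ 2 - p 1 ^ 2 - p 2 ^ 2 - p 3 ^ 2

/-- Squared Euclidean length. -/
def sqEucl (p : Pt) : ℝ := p 0 ^ 2 + p 1 ^ 2 + p 2 ^ 2 + p 3 ^ 2

/-- Translations of ℝ⁴. -/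
def IsTranslation (τ : Pt → Pt) : Prop := ∃ b : Pt, ∀ p, τ p = p + b

/-- Lorentz transformations: bijective linear maps preserving squared Minkowski length. -/
def IsLorentz (L : Pt → Pt) : Prop :=
  IsLinearMap ℝ L ∧ Function.Bijective L ∧ ∀ p, sqMink (L p) = sqMink p

/-- Poincaré transformations: translations composed with Lorentz transformations. -/
def IsPoincare (P : Pt → Pt) : Prop :=
  ∃ τ L, IsTranslation τ ∧ IsLorentz L ∧ P = τ ∘ L

/-- Euclidean isometries: translations composed with bijective linear maps preserving
squared Euclidean length. -/
def IsEuclIsom (A : Pt → Pt) : Prop :=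
  ∃ τ L, IsTranslation τ ∧ IsLinearMap ℝ L ∧ Function.Bijective L ∧
    (∀ p, sqEucl (L p) = sqEucl p) ∧ A = τ ∘ L

/-- Vertical lines: lines parallel to the time axis. -/
def IsVerticalLine (ℓ : Set Pt) : Prop :=
  ∃ q : Pt, ℓ = {p | p 1 = q 1 ∧ p 2 = q 2 ∧ p 3 = q 3}

/-- Trivial transformations: Euclidean isometries taking vertical lines to vertical lines. -/
def IsTrivial (A : Pt → Pt) : Prop :=
  IsEuclIsom A ∧ ∀ ℓ, IsVerticalLine ℓ → IsVerticalLine (A '' ℓ)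

/-- Scalings: maps `p ↦ a • p` with `a ≠ 0`. -/
def IsScaling (D : Pt → Pt) : Prop := ∃ a : ℝ, a ≠ 0 ∧ ∀ p, D p = a • p

/-- The point (1,0,0,0). -/
def unitTime : Pt := fun i => if i = 0 then 1 else 0

/-- Orthochronous maps: maps not changing the direction of time. -/
def Orthochronous (A : Pt → Pt) : Prop := A unitTime 0 > A 0 0

/-- The set of Poincaré transformations. -/
def Poi : Set (Pt → Pt) := {P | IsPoincare P}

/-- The set of orthochronous Poincaré transformations. -/
def PoiUp : Set (Pt → Pt) := {P | IsPoincare P ∧ Orthochronous P}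

/-- The set of trivial transformations. -/
def Triv : Set (Pt → Pt) := {T | IsTrivial T}

/-- The set of orthochronous trivial transformations. -/
def TrivUp : Set (Pt → Pt) := {T | IsTrivial T ∧ Orthochronous T}

/-- The set of scalings. -/
def Scal : Set (Pt → Pt) := {D | IsScaling D}

/-- Composition of two sets of functions: `H ∘ G = {h ∘ g : h ∈ H, g ∈ G}`. -/
def setComp (H G : Set (Pt → Pt)) : Set (Pt → Pt) := {f | ∃ h ∈ H, ∃ g ∈ G, f = h ∘ g}

/-- A set of functions forms a group under composition. -/
def IsCompGroup (G : Set (Pt → Pt)) : Prop :=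
  id ∈ G ∧ (∀ f ∈ G, ∀ g ∈ G, f ∘ g ∈ G) ∧
    ∀ f ∈ G, ∃ g ∈ G, f ∘ g = id ∧ g ∘ f = id
set_option maxHeartbeats 1000000
set_option linter.unnecessarySeqFocus false
set_option linter.unusedVariables false

namespace AZ



lemma pt_ext {p q : Pt} (h0 : p 0 = q 0) (h1 : p 1 = q 1) (h2 : p 2 = q 2)
    (h3 : p 3 = q 3) : p = q := by
  funext i; fin_cases i; exacts [h0, h1, h2, h3]

/-- Minkowski bilinear form. -/
def mB (u v : Pt) : ℝ := u 0 * v 0 - u 1 * v 1 - u 2 * v 2 - u 3 * v 3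
/-- Minkowski quadratic form. -/
def mQ (u : Pt) : ℝ := mB u u

lemma mB_symm (u v : Pt) : mB u v = mB v u := by simp [mB]; ring
lemma mQ_add (u v : Pt) : mQ (u + v) = mQ u + 2 * mB u v + mQ v := by
  simp [mQ, mB, Pi.add_apply]; ring
lemma mQ_sub (u v : Pt) : mQ (u - v) = mQ u - 2 * mB u v + mQ v := by
  simp [mQ, mB, Pi.sub_apply]; ring
lemma mQ_smul (c : ℝ) (u : Pt) : mQ (c • u) = c ^ 2 * mQ u := by
  unfold mQ mB; simp only [Pi.smul_apply, smul_eq_mul]; ring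
lemma mQ_neg (u : Pt) : mQ (-u) = mQ u := by simp [mQ, mB]
lemma mB_add_left (u v w : Pt) : mB (u + v) w = mB u w + mB v w := by
  simp [mB, Pi.add_apply]; ring
lemma mB_add_right (u v w : Pt) : mB u (v + w) = mB u v + mB u w := by
  simp [mB, Pi.add_apply]; ring
lemma mB_smul_left (c : ℝ) (u w : Pt) : mB (c • u) w = c * mB u w := by
  simp [mB, Pi.smul_apply, smul_eq_mul]; ring
lemma mB_smul_right (c : ℝ) (u w : Pt) : mB u (c • w) = c * mB u w := by
  simp [mB, Pi.smul_apply, smul_eq_mul]; ring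
lemma mB_neg_left (u w : Pt) : mB (-u) w = - mB u w := by simp [mB]; ring
lemma mB_sub_left (u v w : Pt) : mB (u - v) w = mB u w - mB v w := by
  simp [mB, Pi.sub_apply]; ring
lemma mB_sub_right (u v w : Pt) : mB u (v - w) = mB u v - mB u w := by
  simp [mB, Pi.sub_apply]; ring

lemma lightlike_iff (p q : Pt) : lightlike p q ↔ mQ (p - q) = 0 := by
  unfold lightlike mQ mB
  simp only [Pi.sub_apply]
  constructor <;> intro h <;> linear_combination h

/-- a null vector with zero time component is zero -/
lemma null_time (u : Pt) (hu : mQ u = 0) (h0 : u 0 = 0) : u = 0 := by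
  unfold mQ mB at hu
  rw [h0] at hu
  have h1 : u 1 = 0 := by nlinarith [sq_nonneg (u 1), sq_nonneg (u 2), sq_nonneg (u 3)]
  have h2 : u 2 = 0 := by nlinarith [sq_nonneg (u 1), sq_nonneg (u 2), sq_nonneg (u 3)]
  have h3 : u 3 = 0 := by nlinarith [sq_nonneg (u 1), sq_nonneg (u 2), sq_nonneg (u 3)]
  funext i; fin_cases i <;> simp [h0, h1, h2, h3]

/-- Two Minkowski-orthogonal null vectors are parallel. -/
lemma null_orth_par (u v : Pt) (hu : mQ u = 0) (hv : mQ v = 0) (huv : mB u v = 0)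
    (hne : u ≠ 0) : ∃ c : ℝ, v = c • u := by
  have h0 : u 0 ≠ 0 := fun h => hne (null_time u hu h)
  unfold mQ at hu hv
  unfold mB at hu hv huv
  have lag : (u 1 * v 2 - u 2 * v 1)^2 + (u 1 * v 3 - u 3 * v 1)^2
      + (u 2 * v 3 - u 3 * v 2)^2 = 0 := by
    linear_combination (-(v 1^2 + v 2^2 + v 3^2)) * hu - (u 0^2) * hv
      + (u 0 * v 0 + u 1 * v 1 + u 2 * v 2 + u 3 * v 3) * huv
  have c12 : u 1 * v 2 - u 2 * v 1 = 0 := by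
    have : (u 1 * v 2 - u 2 * v 1)^2 = 0 := by
      nlinarith [sq_nonneg (u 1 * v 3 - u 3 * v 1), sq_nonneg (u 2 * v 3 - u 3 * v 2), sq_nonneg (u 1 * v 2 - u 2 * v 1)]
    exact pow_eq_zero_iff (by norm_num) |>.mp this
  have c13 : u 1 * v 3 - u 3 * v 1 = 0 := by
    have : (u 1 * v 3 - u 3 * v 1)^2 = 0 := by
      nlinarith [sq_nonneg (u 1 * v 2 - u 2 * v 1), sq_nonneg (u 2 * v 3 - u 3 * v 2), sq_nonneg (u 1 * v 3 - u 3 * v 1)]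
    exact pow_eq_zero_iff (by norm_num) |>.mp this
  have c23 : u 2 * v 3 - u 3 * v 2 = 0 := by
    have : (u 2 * v 3 - u 3 * v 2)^2 = 0 := by
      nlinarith [sq_nonneg (u 1 * v 2 - u 2 * v 1), sq_nonneg (u 1 * v 3 - u 3 * v 1), sq_nonneg (u 2 * v 3 - u 3 * v 2)]
    exact pow_eq_zero_iff (by norm_num) |>.mp this
  -- time-space crosses
  have d1 : u 0 * v 1 - v 0 * u 1 = 0 := by
    have hsq : (u 0 * v 1 - v 0 * u 1)^2 = (u 2 * v 1 - u 1 * v 2)^2 + (u 3 * v 1 - u 1 * v 3)^2 := by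
      linear_combination (v 1^2) * hu + (u 1^2) * hv - 2 * (u 1 * v 1) * huv
    have : (u 0 * v 1 - v 0 * u 1)^2 = 0 := by rw [hsq]; nlinarith [c12, c13]
    exact pow_eq_zero_iff (by norm_num) |>.mp this
  have d2 : u 0 * v 2 - v 0 * u 2 = 0 := by
    have hsq : (u 0 * v 2 - v 0 * u 2)^2 = (u 1 * v 2 - u 2 * v 1)^2 + (u 3 * v 2 - u 2 * v 3)^2 := by
      linear_combination (v 2^2) * hu + (u 2^2) * hv - 2 * (u 2 * v 2) * huv
    have : (u 0 * v 2 - v 0 * u 2)^2 = 0 := by rw [hsq]; nlinarith [c12, c23]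
    exact pow_eq_zero_iff (by norm_num) |>.mp this
  have d3 : u 0 * v 3 - v 0 * u 3 = 0 := by
    have hsq : (u 0 * v 3 - v 0 * u 3)^2 = (u 1 * v 3 - u 3 * v 1)^2 + (u 2 * v 3 - u 3 * v 2)^2 := by
      linear_combination (v 3^2) * hu + (u 3^2) * hv - 2 * (u 3 * v 3) * huv
    have : (u 0 * v 3 - v 0 * u 3)^2 = 0 := by rw [hsq]; nlinarith [c13, c23]
    exact pow_eq_zero_iff (by norm_num) |>.mp this
  refine ⟨v 0 / u 0, pt_ext ?_ ?_ ?_ ?_⟩ <;>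
    simp only [Pi.smul_apply, smul_eq_mul] <;> field_simp <;> linarith [d1, d2, d3]





def mk4 (a b c d : ℝ) : Pt := fun i => if i = 0 then a else if i = 1 then b else if i = 2 then c else d
@[simp] lemma mk4_0 (a b c d : ℝ) : mk4 a b c d 0 = a := rfl
@[simp] lemma mk4_1 (a b c d : ℝ) : mk4 a b c d 1 = b := rfl
@[simp] lemma mk4_2 (a b c d : ℝ) : mk4 a b c d 2 = c := rfl
@[simp] lemma mk4_3 (a b c d : ℝ) : mk4 a b c d 3 = d := rfl

/-- spatial dot product -/
def dot3 (u v : Pt) : ℝ := u 1 * v 1 + u 2 * v 2 + u 3 * v 3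

/-- Not parallel. -/
def NPar (u v : Pt) : Prop := ∀ c : ℝ, u ≠ c • v

/-- choice of a unit spatial vector orthogonal to the spatial part of m -/
lemma exists_orth_unit (m : Pt) :
    ∃ e : Pt, e 0 = 0 ∧ dot3 e e = 1 ∧ dot3 e m = 0 := by
  by_cases h12 : m 1 = 0 ∧ m 2 = 0
  · exact ⟨mk4 0 1 0 0, rfl, by simp [dot3], by simp [dot3, h12.1]⟩
  · have hn : m 1 ^ 2 + m 2 ^ 2 > 0 := by
      rcases (not_and_or.mp h12) with h | h
      · positivity
      · positivity
    set n := Real.sqrt (m 1 ^ 2 + m 2 ^ 2) with hn'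
    have hnpos : 0 < n := Real.sqrt_pos.mpr hn
    have hn2 : n ^ 2 = m 1 ^ 2 + m 2 ^ 2 := Real.sq_sqrt hn.le
    refine ⟨mk4 0 (-(m 2)/n) (m 1/n) 0, rfl, ?_, ?_⟩
    · simp only [dot3, mk4_1, mk4_2, mk4_3]
      field_simp
      linarith [hn2]
    · simp only [dot3, mk4_1, mk4_2, mk4_3]
      field_simp
      ring

/-- decomposition of a vector with nonzero spatial part into two null vectors
    with spatial parts parallel to the original -/
lemma null_decomp_spatial (y : Pt) (hy : dot3 y y ≠ 0) :
    ∃ k k' : ℝ, mQ (mk4 (Real.sqrt (dot3 y y)) (y 1) (y 2) (y 3)) = 0 ∧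
      mQ (mk4 (-(Real.sqrt (dot3 y y))) (y 1) (y 2) (y 3)) = 0 ∧
      y = k • mk4 (Real.sqrt (dot3 y y)) (y 1) (y 2) (y 3)
        + k' • mk4 (-(Real.sqrt (dot3 y y))) (y 1) (y 2) (y 3) := by
  have hpos : 0 < dot3 y y := by
    rcases lt_or_gt_of_ne hy with h | h
    · exfalso
      have h0 : 0 ≤ dot3 y y := by
        unfold dot3
        nlinarith [mul_self_nonneg (y 1), mul_self_nonneg (y 2), mul_self_nonneg (y 3)]
      linarith
    · exact h
  set r := Real.sqrt (dot3 y y) with hr'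
  have hrpos : 0 < r := Real.sqrt_pos.mpr hpos
  have hr2 : r ^ 2 = dot3 y y := Real.sq_sqrt hpos.le
  refine ⟨(y 0 + r)/(2*r), (r - y 0)/(2*r), ?_, ?_, ?_⟩
  · unfold mQ mB; simp only [mk4_0, mk4_1, mk4_2, mk4_3]
    unfold dot3 at hr2; linear_combination hr2
  · unfold mQ mB; simp only [mk4_0, mk4_1, mk4_2, mk4_3]
    unfold dot3 at hr2; linear_combination hr2
  · refine pt_ext ?_ ?_ ?_ ?_ <;>
      simp only [Pi.add_apply, Pi.smul_apply, smul_eq_mul, mk4_0, mk4_1, mk4_2, mk4_3] <;>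
      field_simp <;> ring

/-- every vector is a sum of two null vectors -/
lemma null_decomp (x : Pt) : ∃ w₁ w₂ : Pt, mQ w₁ = 0 ∧ mQ w₂ = 0 ∧ x = w₁ + w₂ := by
  by_cases hy : dot3 x x = 0
  · have h1 : x 1 = 0 ∧ x 2 = 0 ∧ x 3 = 0 := by
      unfold dot3 at hy
      refine ⟨?_, ?_, ?_⟩ <;> nlinarith [sq_nonneg (x 1), sq_nonneg (x 2), sq_nonneg (x 3)]
    refine ⟨mk4 (x 0/2) (x 0/2) 0 0, mk4 (x 0/2) (-(x 0)/2) 0 0, ?_, ?_, ?_⟩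
    · unfold mQ mB; simp; try ring
    · unfold mQ mB; simp; try ring
    · refine pt_ext ?_ ?_ ?_ ?_ <;>
        simp [h1.1, h1.2.1, h1.2.2] <;> try ring
  · obtain ⟨k, k', hw1, hw2, hsum⟩ := null_decomp_spatial x hy
    refine ⟨_, _, ?_, ?_, hsum⟩
    · rw [mQ_smul, hw1, mul_zero]
    · rw [mQ_smul, hw2, mul_zero]

lemma dot3_nonneg (y : Pt) : 0 ≤ dot3 y y := by
  unfold dot3
  nlinarith [mul_self_nonneg (y 1), mul_self_nonneg (y 2), mul_self_nonneg (y 3)]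

lemma dot3_eq_zero {y : Pt} (h : dot3 y y = 0) : y 1 = 0 ∧ y 2 = 0 ∧ y 3 = 0 := by
  unfold dot3 at h
  refine ⟨?_, ?_, ?_⟩ <;> nlinarith [mul_self_nonneg (y 1), mul_self_nonneg (y 2), mul_self_nonneg (y 3)]

lemma null_time' (u : Pt) (hu : mQ u = 0) (h0 : u 0 = 0) : u = 0 := by
  unfold mQ mB at hu
  rw [h0] at hu
  have h := dot3_eq_zero (y := u) (by unfold dot3; nlinarith)
  exact pt_ext h0 h.1 h.2.1 h.2.2

/-- decomposition of any vector into three null vectors, each zero or non-parallel to `v` -/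
lemma null_decomp3 (v x : Pt) (hv : mQ v = 0) (hvne : v ≠ 0) :
    ∃ z w₁ w₂ : Pt, mQ z = 0 ∧ mQ w₁ = 0 ∧ mQ w₂ = 0 ∧
      (z = 0 ∨ NPar z v) ∧ (w₁ = 0 ∨ NPar w₁ v) ∧ (w₂ = 0 ∨ NPar w₂ v) ∧
      x = z + w₁ + w₂ := by
  have hv0 : v 0 ≠ 0 := fun h => hvne (null_time' v hv h)
  have hv3 : dot3 v v ≠ 0 := by
    unfold mQ mB at hv; unfold dot3
    intro h; apply hv0; nlinarith
  obtain ⟨e, he0, hee, hev⟩ := exists_orth_unit v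
  set d := dot3 x e with hd
  set s := |d| + 1 with hs
  have hs0 : s ≠ 0 := by positivity
  have hsd : d - s ≠ 0 := by
    have : d ≤ |d| := le_abs_self d
    intro h; rw [hs] at h; linarith
  set u₀ : Pt := mk4 1 (e 1) (e 2) (e 3) with hu₀
  have hu₀Q : mQ u₀ = 0 := by
    unfold mQ mB; rw [hu₀]; simp only [mk4_0, mk4_1, mk4_2, mk4_3]
    unfold dot3 at hee; linear_combination -hee
  set z : Pt := s • u₀ with hz
  have hzQ : mQ z = 0 := by rw [hz, mQ_smul, hu₀Q, mul_zero]
  set y : Pt := x - z with hy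
  have hye : dot3 y e = d - s := by
    rw [hy, hz, hd]
    unfold dot3
    simp only [Pi.sub_apply, Pi.smul_apply, smul_eq_mul, hu₀, mk4_1, mk4_2, mk4_3]
    unfold dot3 at hee; linear_combination (-s) * hee
  have hyne : dot3 y y ≠ 0 := by
    intro h
    obtain ⟨h1, h2, h3⟩ := dot3_eq_zero h
    apply hsd; rw [← hye]; unfold dot3; rw [h1, h2, h3]; ring
  obtain ⟨k, k', hw1, hw2, hsum⟩ := null_decomp_spatial y hyne
  set r := Real.sqrt (dot3 y y) with hr
  set Y : Pt := mk4 r (y 1) (y 2) (y 3) with hY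
  set Y' : Pt := mk4 (-r) (y 1) (y 2) (y 3) with hY'
  refine ⟨z, k • Y, k' • Y', hzQ, ?_, ?_, Or.inr ?_, ?_, ?_, ?_⟩
  · rw [mQ_smul, hw1, mul_zero]
  · rw [mQ_smul, hw2, mul_zero]
  · -- NPar z v
    intro c hzc
    have h1 : s * e 1 = c * v 1 := by
      have := congrFun hzc 1
      simpa [hz, hu₀, Pi.smul_apply] using this
    have h2 : s * e 2 = c * v 2 := by
      have := congrFun hzc 2
      simpa [hz, hu₀, Pi.smul_apply] using this
    have h3 : s * e 3 = c * v 3 := by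
      have := congrFun hzc 3
      simpa [hz, hu₀, Pi.smul_apply] using this
    have hc : c * dot3 v v = 0 := by
      unfold dot3
      unfold dot3 at hev
      linear_combination (-(v 1)) * h1 - (v 2) * h2 - (v 3) * h3 + s * hev
    have hc0 : c = 0 := by
      rcases mul_eq_zero.mp hc with h | h
      · exact h
      · exact absurd h hv3
    have h0 : s * 1 = c * v 0 := by
      have := congrFun hzc 0
      simpa [hz, hu₀, Pi.smul_apply] using this
    rw [hc0, zero_mul, mul_one] at h0
    exact hs0 h0
  · -- w₁ = 0 ∨ NPar w₁ v
    by_cases hk : k = 0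
    · left; rw [hk, zero_smul]
    · right; intro c hc
      have h1 : k * y 1 = c * v 1 := by
        have := congrFun hc 1
        simpa [hY, Pi.smul_apply] using this
      have h2 : k * y 2 = c * v 2 := by
        have := congrFun hc 2
        simpa [hY, Pi.smul_apply] using this
      have h3 : k * y 3 = c * v 3 := by
        have := congrFun hc 3
        simpa [hY, Pi.smul_apply] using this
      have : k * (d - s) = 0 := by
        rw [← hye]
        unfold dot3
        unfold dot3 at hev
        linear_combination (e 1) * h1 + (e 2) * h2 + (e 3) * h3 + c * hev
      rcases mul_eq_zero.mp this with h | h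
      · exact hk h
      · exact hsd h
  · -- w₂ = 0 ∨ NPar w₂ v
    by_cases hk : k' = 0
    · left; rw [hk, zero_smul]
    · right; intro c hc
      have h1 : k' * y 1 = c * v 1 := by
        have := congrFun hc 1
        simpa [hY', Pi.smul_apply] using this
      have h2 : k' * y 2 = c * v 2 := by
        have := congrFun hc 2
        simpa [hY', Pi.smul_apply] using this
      have h3 : k' * y 3 = c * v 3 := by
        have := congrFun hc 3
        simpa [hY', Pi.smul_apply] using this
      have : k' * (d - s) = 0 := by
        rw [← hye]
        unfold dot3
        unfold dot3 at hev
        linear_combination (e 1) * h1 + (e 2) * h2 + (e 3) * h3 + c * hev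
      rcases mul_eq_zero.mp this with h | h
      · exact hk h
      · exact hsd h
  · -- sum
    rw [add_assoc, ← hsum, hy]; abel


section Core

variable (h : Pt → Pt)

/-- expansion: `mQ (c + a•v)` for null `v` -/
lemma expand1 (c v : Pt) (a : ℝ) (hv : mQ v = 0) :
    mQ (c + a • v) = mQ c + 2 * a * mB c v := by
  unfold mQ mB at hv ⊢
  simp only [Pi.add_apply, Pi.smul_apply, smul_eq_mul]
  linear_combination (a^2) * hv

/-- expansion: `mQ (c + t•w - s•u)` for null `u, w` -/
lemma expand2 (c u w : Pt) (s t : ℝ) (hu : mQ u = 0) (hw : mQ w = 0) :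
    mQ (c + t • w - s • u) = mQ c + 2*t*mB c w - 2*s*mB c u - 2*s*t*mB u w := by
  unfold mQ mB at hu hw ⊢
  simp only [Pi.add_apply, Pi.sub_apply, Pi.smul_apply, smul_eq_mul]
  linear_combination (t^2) * hw + (s^2) * hu

/-- two nonparallel nonzero null vectors are not Minkowski-orthogonal -/
lemma npar_mB_ne (u w : Pt) (hu : mQ u = 0) (hw : mQ w = 0) (hune : u ≠ 0)
    (hwne : w ≠ 0) (hnp : NPar u w) : mB u w ≠ 0 := by
  intro hB
  obtain ⟨c, hc⟩ := null_orth_par u w hu hw hB hune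
  have hc0 : c ≠ 0 := by rintro rfl; rw [zero_smul] at hc; exact hwne hc
  exact hnp c⁻¹ (by rw [hc, smul_smul, inv_mul_cancel₀ hc0, one_smul])

/-- P1: between two parallel light lines, either every point has a lightlike
partner, or no point does. -/
lemma par_partner (p q v : Pt) (hv : mQ v = 0) :
    (∀ t : ℝ, ∃ s : ℝ, mQ ((p + t • v) - (q + s • v)) = 0) ∨
    (∀ t s : ℝ, mQ ((p + t • v) - (q + s • v)) ≠ 0) := by
  have key : ∀ t s : ℝ, (p + t • v) - (q + s • v) = (p - q) + (t - s) • v := by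
    intro t s; module
  by_cases hB : mB (p - q) v = 0
  · by_cases hQ : mQ (p - q) = 0
    · left; intro t; exact ⟨t, by rw [key, expand1 _ _ _ hv, hB, hQ]; ring⟩
    · right; intro t s
      rw [key, expand1 _ _ _ hv, hB]
      simpa using hQ
  · left; intro t
    refine ⟨t + mQ (p - q) / (2 * mB (p - q) v), ?_⟩
    rw [key, expand1 _ _ _ hv]
    field_simp
    ring
  
/-- P2: between two disjoint nonparallel light lines, some point has a partner
and some point has no partner. -/
lemma skew_partner (x y u w : Pt) (hu : mQ u = 0) (hw : mQ w = 0) (hune : u ≠ 0)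
    (hwne : w ≠ 0) (hnp : NPar u w)
    (hdisj : ∀ s t : ℝ, x + s • u ≠ y + t • w) :
    (∃ s t : ℝ, mQ ((x + s • u) - (y + t • w)) = 0) ∧
    (∃ s : ℝ, ∀ t : ℝ, mQ ((x + s • u) - (y + t • w)) ≠ 0) := by
  have hBuw : mB u w ≠ 0 := npar_mB_ne u w hu hw hune hwne hnp
  obtain ⟨c, hc⟩ : ∃ c : Pt, c = y - x := ⟨_, rfl⟩
  have key : ∀ s t : ℝ, (x + s • u) - (y + t • w) = -(c + t • w - s • u) := by
    intro s t; rw [hc]; module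
  have val : ∀ s t : ℝ, mQ ((x + s • u) - (y + t • w))
      = mQ c + 2*t*mB c w - 2*s*mB c u - 2*s*t*mB u w := by
    intro s t; rw [key, mQ_neg, expand2 c u w s t hu hw]
  obtain ⟨s₀, hs₀⟩ : ∃ s₀ : ℝ, s₀ = mB c w / mB u w := ⟨_, rfl⟩
  have hs₀B : mB (c - s₀ • u) w = 0 := by
    rw [mB_sub_left, mB_smul_left, hs₀]; field_simp; ring
  have hQd : mQ (c - s₀ • u) ≠ 0 := by
    intro hQ
    obtain ⟨k, hk⟩ := null_orth_par w (c - s₀ • u) hw hQ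
      (by rw [mB_symm]; exact hs₀B) hwne
    apply hdisj s₀ (-k)
    have : c - s₀ • u = k • w := hk
    have h2 : y = x + s₀ • u + k • w := by
      rw [hc] at this; linear_combination (norm := module) this
    rw [h2]; module
  constructor
  · refine ⟨s₀ + 1, (2*(s₀+1)*mB c u - mQ c) / (2*(mB c w - (s₀+1) * mB u w)), ?_⟩
    have hden : mB c w - (s₀+1) * mB u w ≠ 0 := by
      rw [hs₀]; field_simp
      intro hh; apply hBuw; linarith
    rw [val]
    field_simp
    ring
  · refine ⟨s₀, fun t => ?_⟩
    have hrw : mQ (c - s₀ • u) = mQ c - 2*s₀*mB c u := by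
      rw [mQ_sub, mB_smul_right, mQ_smul, hu]; ring
    have h0 : mB c w - s₀ * mB u w = 0 := by rw [hs₀]; field_simp; ring
    have : mQ ((x + s₀ • u) - (y + t • w)) = mQ (c - s₀ • u) := by
      rw [val, hrw]; linear_combination (2*t) * h0
    rw [this]; exact hQd

end Core

section Geom

variable {h : Pt → Pt}

lemma diff_ne (hinj : Function.Injective h) (p v : Pt) (hvne : v ≠ 0) :
    h (p + v) - h p ≠ 0 := by
  intro hh
  rw [sub_eq_zero] at hh
  have := hinj hh
  apply hvne
  have := congrArg (fun z => z - p) this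
  simpa using this

/-- the image of a point on a light line lies on the image light line -/
lemma line_map (hinj : Function.Injective h)
    (hiff : ∀ p q : Pt, mQ (p - q) = 0 ↔ mQ (h p - h q) = 0)
    (p v : Pt) (hv : mQ v = 0) (hvne : v ≠ 0) (t : ℝ) :
    ∃ c : ℝ, h (p + t • v) = h p + c • (h (p + v) - h p) := by
  have hd0 : h (p + v) - h p ≠ 0 := diff_ne hinj p v hvne
  have hdnull : mQ (h (p + v) - h p) = 0 := by
    rw [← hiff]
    simpa using hv
  have hxnull : mQ (h (p + t • v) - h p) = 0 := by
    rw [← hiff]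
    have : p + t • v - p = t • v := by module
    rw [this, mQ_smul, hv, mul_zero]
  have hxd : mQ (h (p + t • v) - h (p + v)) = 0 := by
    rw [← hiff]
    have : p + t • v - (p + v) = (t - 1) • v := by module
    rw [this, mQ_smul, hv, mul_zero]
  -- mB d x = 0
  have hB : mB (h (p + v) - h p) (h (p + t • v) - h p) = 0 := by
    have e1 : (h (p + v) - h p) - (h (p + t • v) - h p) = h (p + v) - h (p + t • v) := by
      module
    have e2 : mQ (h (p + v) - h (p + t • v)) = 0 := by
      have : h (p + v) - h (p + t • v) = -(h (p + t • v) - h (p + v)) := by module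
      rw [this, mQ_neg]; exact hxd
    have := mQ_sub (h (p + v) - h p) (h (p + t • v) - h p)
    rw [e1, e2, hdnull, hxnull] at this
    linarith
  obtain ⟨c, hc⟩ := null_orth_par _ _ hdnull hxnull hB hd0
  refine ⟨c, ?_⟩
  have : h (p + t • v) - h p = c • (h (p + v) - h p) := hc
  linear_combination (norm := module) this

/-- preservation of `mQ`-nullity of differences transfers to the inverse -/
lemma inv_iff (hbij : Function.Bijective h)
    (hiff : ∀ p q : Pt, mQ (p - q) = 0 ↔ mQ (h p - h q) = 0) :
    ∃ g : Pt → Pt, Function.Injective g ∧ (∀ x, h (g x) = x) ∧ (∀ x, g (h x) = x) ∧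
      (∀ p q : Pt, mQ (p - q) = 0 ↔ mQ (g p - g q) = 0) := by
  obtain ⟨g, hg1, hg2⟩ := Function.bijective_iff_has_inverse.mp hbij
  refine ⟨g, Function.LeftInverse.injective (g := h) hg2, hg2, hg1, fun p q => ?_⟩
  rw [hiff (g p) (g q), hg2, hg2]

/-- the image of a light line fills a whole light line -/
lemma line_onto (hbij : Function.Bijective h)
    (hiff : ∀ p q : Pt, mQ (p - q) = 0 ↔ mQ (h p - h q) = 0)
    (p v : Pt) (hv : mQ v = 0) (hvne : v ≠ 0) (c : ℝ) :
    ∃ t : ℝ, h (p + t • v) = h p + c • (h (p + v) - h p) := by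
  obtain ⟨g, hginj, hgr, hgl, hgiff⟩ := inv_iff hbij hiff
  have hd0 : h (p + v) - h p ≠ 0 := diff_ne hbij.1 p v hvne
  have hdnull : mQ (h (p + v) - h p) = 0 := by
    rw [← hiff]; simpa using hv
  obtain ⟨k, hk⟩ := line_map hginj hgiff (h p) (h (p + v) - h p) hdnull hd0 c
  have e1 : h p + (h (p + v) - h p) = h (p + v) := by module
  rw [e1, hgl, hgl] at hk
  have e0 : p + v - p = v := by module
  rw [e0] at hk
  exact ⟨k, by rw [← hk, hgr]⟩

/-- images of disjoint parallel light lines have parallel directions -/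
lemma par_pres (hbij : Function.Bijective h)
    (hiff : ∀ p q : Pt, mQ (p - q) = 0 ↔ mQ (h p - h q) = 0)
    (p q v : Pt) (hv : mQ v = 0) (hvne : v ≠ 0)
    (hdisj : ∀ t s : ℝ, p + t • v ≠ q + s • v) :
    ∃ k : ℝ, h (q + v) - h q = k • (h (p + v) - h p) := by
  by_contra hno
  push_neg at hno
  have hinj := hbij.1
  have hd1ne : h (p + v) - h p ≠ 0 := diff_ne hinj p v hvne
  have hd2ne : h (q + v) - h q ≠ 0 := diff_ne hinj q v hvne
  have hd1null : mQ (h (p + v) - h p) = 0 := by rw [← hiff]; simpa using hv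
  have hd2null : mQ (h (q + v) - h q) = 0 := by rw [← hiff]; simpa using hv
  have hnp21 : NPar (h (q + v) - h q) (h (p + v) - h p) := hno
  have hnp12 : NPar (h (p + v) - h p) (h (q + v) - h q) := by
    intro k hk
    have hk0 : k ≠ 0 := by rintro rfl; rw [zero_smul] at hk; exact hd1ne hk
    exact hno k⁻¹ (by rw [hk, smul_smul, inv_mul_cancel₀ hk0, one_smul])
  -- image lines are disjoint
  have himdisj : ∀ s t : ℝ, h p + s • (h (p + v) - h p) ≠ h q + t • (h (q + v) - h q) := by
    intro s t heq
    obtain ⟨t₁, ht₁⟩ := line_onto hbij hiff p v hv hvne s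
    obtain ⟨t₂, ht₂⟩ := line_onto hbij hiff q v hv hvne t
    rw [← ht₁, ← ht₂] at heq
    exact hdisj t₁ t₂ (hinj heq)
  obtain ⟨⟨s₁, t₁, hrel⟩, ⟨s₂, hbad⟩⟩ :=
    skew_partner (h p) (h q) (h (p + v) - h p) (h (q + v) - h q)
      hd1null hd2null hd1ne hd2ne hnp12 himdisj
  rcases par_partner p q v hv with hall | hnone
  · -- every point has a partner: contradicts the no-partner point s₂
    obtain ⟨ta, hta⟩ := line_onto hbij hiff p v hv hvne s₂
    obtain ⟨s', hs'⟩ := hall ta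
    rw [hiff] at hs'
    obtain ⟨cb, hcb⟩ := line_map hinj hiff q v hv hvne s'
    rw [hta, hcb] at hs'
    exact hbad cb hs'
  · -- no point has a partner: contradicts the partner pair (s₁, t₁)
    obtain ⟨ta, hta⟩ := line_onto hbij hiff p v hv hvne s₁
    obtain ⟨tb, htb⟩ := line_onto hbij hiff q v hv hvne t₁
    exact hnone ta tb ((hiff _ _).mpr (by rw [hta, htb]; exact hrel))

/-- the parallelogram law for lightlike sides -/
lemma pgram (hbij : Function.Bijective h)
    (hiff : ∀ p q : Pt, mQ (p - q) = 0 ↔ mQ (h p - h q) = 0)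
    (u v : Pt) (hu : mQ u = 0) (hv : mQ v = 0)
    (hnpuv : NPar u v) (hnpvu : NPar v u) (p : Pt) :
    h (p + u + v) = h (p + u) + (h (p + v) - h p) := by
  have hinj := hbij.1
  have hune : u ≠ 0 := fun hh => hnpuv 0 (by rw [hh, zero_smul])
  have hvne : v ≠ 0 := fun hh => hnpvu 0 (by rw [hh, zero_smul])
  -- two parallel-line applications
  have hdisj1 : ∀ t s : ℝ, p + t • v ≠ p + u + s • v := by
    intro t s heq
    apply hnpuv (t - s)
    have := congrArg (fun z => z - p - s • v) heq
    linear_combination (norm := module) - this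
  have hdisj2 : ∀ t s : ℝ, p + t • u ≠ p + v + s • u := by
    intro t s heq
    apply hnpvu (t - s)
    have := congrArg (fun z => z - p - s • u) heq
    linear_combination (norm := module) - this
  obtain ⟨k, hk⟩ := par_pres hbij hiff p (p + u) v hv hvne hdisj1
  obtain ⟨k', hk'⟩ := par_pres hbij hiff p (p + v) u hu hune hdisj2
  have ecomm : p + v + u = p + u + v := by module
  rw [ecomm] at hk'
  -- hk : h (p + u + v) - h (p + u) = k • d₁, hk' : h (p + v + u) ... rewritten
  -- independence of e₁ := h(p+u) - h p and d₁ := h(p+v) - h p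
  have hnpe : ∀ c : ℝ, h (p + u) - h p ≠ c • (h (p + v) - h p) := by
    intro c hc
    obtain ⟨t, ht⟩ := line_onto hbij hiff p v hv hvne c
    have : h (p + u) = h (p + t • v) := by
      rw [ht]; linear_combination (norm := module) hc
    have := hinj this
    apply hnpuv t
    have := congrArg (fun z => z - p) this
    simpa using this
  have main : (1 - k') • (h (p + u) - h p) = (1 - k) • (h (p + v) - h p) := by
    linear_combination (norm := module) hk' - hk
  have hd1ne : h (p + v) - h p ≠ 0 := diff_ne hinj p v hvne
  have hk'1 : k' = 1 := by
    by_contra hne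
    have h1 : (1 - k') ≠ 0 := sub_ne_zero.mpr (fun hh => hne hh.symm)
    have := congrArg (fun z => (1 - k')⁻¹ • z) main
    simp only [smul_smul, inv_mul_cancel₀ h1, one_smul] at this
    exact hnpe _ this
  rw [hk'1] at main
  have hk1 : k = 1 := by
    rw [sub_self, zero_smul] at main
    rcases smul_eq_zero.mp main.symm with hc | hc
    · linarith [hc]
    · exact absurd hc hd1ne
  rw [hk1] at hk
  linear_combination (norm := module) hk

end Geom

section Add

variable {h : Pt → Pt}

lemma npar_of_npar (u v : Pt) (hvne : v ≠ 0) (hnp : NPar u v) : NPar v u := by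
  intro c hc
  have hc0 : c ≠ 0 := by rintro rfl; rw [zero_smul] at hc; exact hvne hc
  exact hnp c⁻¹ (by rw [hc, smul_smul, inv_mul_cancel₀ hc0, one_smul])

lemma step_lemma (hbij : Function.Bijective h)
    (hiff : ∀ p q : Pt, mQ (p - q) = 0 ↔ mQ (h p - h q) = 0)
    (v : Pt) (hv : mQ v = 0) (hvne : v ≠ 0)
    (w : Pt) (hw : mQ w = 0) (hcase : w = 0 ∨ NPar w v) (p : Pt) :
    h (p + w + v) - h (p + w) = h (p + v) - h p := by
  rcases hcase with rfl | hnp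
  · rw [add_zero]
  · have := pgram hbij hiff w v hw hv hnp (npar_of_npar w v hvne hnp) p
    linear_combination (norm := module) this

lemma translate_lemma (hbij : Function.Bijective h)
    (hiff : ∀ p q : Pt, mQ (p - q) = 0 ↔ mQ (h p - h q) = 0)
    (v : Pt) (hv : mQ v = 0) (p : Pt) :
    h (p + v) - h p = h v - h 0 := by
  by_cases hvne : v = 0
  · simp [hvne]
  · obtain ⟨z, w₁, w₂, hzQ, hw1Q, hw2Q, hzc, hw1c, hw2c, hsum⟩ :=
      null_decomp3 v p hv hvne
    have s1 := step_lemma hbij hiff v hv hvne z hzQ hzc 0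
    have s2 := step_lemma hbij hiff v hv hvne w₁ hw1Q hw1c z
    have s3 := step_lemma hbij hiff v hv hvne w₂ hw2Q hw2c (z + w₁)
    rw [zero_add, zero_add] at s1
    have e1 : z + w₁ + w₂ + v = p + v := by rw [← hsum]
    have e2 : z + w₁ + w₂ = p := hsum.symm
    rw [e1, e2] at s3
    rw [s3, s2, s1]

lemma additive_lemma (hbij : Function.Bijective h)
    (hiff : ∀ p q : Pt, mQ (p - q) = 0 ↔ mQ (h p - h q) = 0)
    (h0 : h 0 = 0) (p x : Pt) :
    h (p + x) = h p + h x := by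
  obtain ⟨w₁, w₂, hw1, hw2, hsum⟩ := null_decomp x
  have t1 := translate_lemma hbij hiff w₁ hw1 p
  have t2 := translate_lemma hbij hiff w₂ hw2 (p + w₁)
  have t3 := translate_lemma hbij hiff w₂ hw2 w₁
  rw [h0] at t1 t2 t3
  have e1 : p + x = p + w₁ + w₂ := by rw [hsum, add_assoc]
  have e2 : h x = h (w₁ + w₂) := by rw [hsum]
  rw [e1, e2]
  linear_combination (norm := module) t1 + t2 - t3

end Add

section Homog

variable {h : Pt → Pt}

lemma smul_cancel {x : Pt} (hx : x ≠ 0) {a b : ℝ} (hab : a • x = b • x) : a = b := by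
  by_contra hne
  have hz : (a - b) • x = 0 := by rw [sub_smul, hab, sub_self]
  rcases smul_eq_zero.mp hz with hc | hc
  · exact hne (by linarith [sub_eq_zero.mp hc])
  · exact hx hc

lemma exists_ne_zero_two_forms (φ ψ : Pt →ₗ[ℝ] ℝ) :
    ∃ a : Pt, a ≠ 0 ∧ φ a = 0 ∧ ψ a = 0 := by
  have hni : ¬ Function.Injective (φ.prod ψ) := by
    intro hinj
    have := LinearMap.finrank_le_finrank_of_injective hinj
    simp at this
  rw [← LinearMap.ker_eq_bot] at hni
  rcases Submodule.exists_mem_ne_zero_of_ne_bot hni with ⟨a, ha, ha0⟩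
  rw [LinearMap.mem_ker, LinearMap.prod_apply] at ha
  exact ⟨a, ha0, congrArg Prod.fst ha, congrArg Prod.snd ha⟩

/-- `mB u ·` as a linear map -/
def mBL (u : Pt) : Pt →ₗ[ℝ] ℝ where
  toFun := fun x => mB u x
  map_add' := fun a b => mB_add_right u a b
  map_smul' := by intro c a; simp [mB_smul_right]

lemma exists_npar (v : Pt) (hvne : v ≠ 0) :
    ∃ u : Pt, mQ u = 0 ∧ u ≠ 0 ∧ NPar u v ∧ NPar v u := by
  have h1Q : mQ (mk4 1 1 0 0) = 0 := by unfold mQ mB; simp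
  have h2Q : mQ (mk4 1 (-1) 0 0) = 0 := by unfold mQ mB; simp
  have h1ne : (mk4 1 1 0 0 : Pt) ≠ 0 := by
    intro hh; have := congrFun hh 0; simp at this
  have h2ne : (mk4 1 (-1) 0 0 : Pt) ≠ 0 := by
    intro hh; have := congrFun hh 0; simp at this
  by_cases hc : ∃ c : ℝ, mk4 1 1 0 0 = c • v
  · obtain ⟨c, hcv⟩ := hc
    refine ⟨mk4 1 (-1) 0 0, h2Q, h2ne, ?_, ?_⟩
    · intro c' h'
      have e1 : (1:ℝ) = c * v 0 := by have := congrFun hcv 0; simpa using this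
      have e2 : (1:ℝ) = c * v 1 := by have := congrFun hcv 1; simpa using this
      have e3 : (1:ℝ) = c' * v 0 := by have := congrFun h' 0; simpa using this
      have e4 : (-1:ℝ) = c' * v 1 := by have := congrFun h' 1; simpa using this
      nlinarith [e1, e2, e3, e4]
    · intro k hk
      have e1 : (1:ℝ) = c * (k * 1) := by
        have := congrFun hcv 0; rw [hk] at this
        simpa [Pi.smul_apply, smul_eq_mul] using this
      have e2 : (1:ℝ) = c * (k * (-1)) := by
        have := congrFun hcv 1; rw [hk] at this
        simpa [Pi.smul_apply, smul_eq_mul] using this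
      nlinarith [e1, e2]
  · refine ⟨mk4 1 1 0 0, h1Q, h1ne, fun c hh => hc ⟨c, hh⟩, ?_⟩
    intro k hk
    have hk0 : k ≠ 0 := by rintro rfl; rw [zero_smul] at hk; exact hvne hk
    exact hc ⟨k⁻¹, by rw [hk, smul_smul, inv_mul_cancel₀ hk0, one_smul]⟩

lemma expand3 (a u v : Pt) (r s t : ℝ) (hu : mQ u = 0) (hv : mQ v = 0)
    (hau : mB u a = 0) (hav : mB v a = 0) :
    mQ (t • u - (r • a + s • v)) = r^2 * mQ a - 2*s*t*mB u v := by
  unfold mQ at hu hv ⊢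
  unfold mB at hu hv hau hav ⊢
  simp only [Pi.add_apply, Pi.sub_apply, Pi.smul_apply, smul_eq_mul]
  linear_combination (t^2) * hu + (s^2) * hv - (2*t*r) * hau + (2*r*s) * hav

lemma expand_pair (a x : Pt) (r s : ℝ) (hx : mQ x = 0) (hxa : mB x a = 0) :
    mQ (r • a + s • x) = r^2 * mQ a := by
  unfold mQ at hx ⊢
  unfold mB at hx hxa ⊢
  simp only [Pi.add_apply, Pi.smul_apply, smul_eq_mul]
  linear_combination (s^2) * hx + (2*r*s) * hxa

lemma sigma_exists (hbij : Function.Bijective h)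
    (hiff : ∀ p q : Pt, mQ (p - q) = 0 ↔ mQ (h p - h q) = 0)
    (h0 : h 0 = 0) (hadd : ∀ p x : Pt, h (p + x) = h p + h x)
    (w : Pt) (hw : mQ w = 0) (hwne : w ≠ 0) :
    ∃ σ : ℝ → ℝ, (∀ t, h (t • w) = σ t • h w) ∧ σ 0 = 0 ∧ σ 1 = 1 ∧
      (∀ s t, σ (s + t) = σ s + σ t) ∧ Function.Surjective σ ∧ Function.Injective σ := by
  have hhwne : h w ≠ 0 := by
    intro hh
    exact hwne (hbij.1 (by rw [hh, h0]))
  have hex : ∀ t : ℝ, ∃ c : ℝ, h (t • w) = c • h w := by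
    intro t
    obtain ⟨c, hc⟩ := line_map hbij.1 hiff 0 w hw hwne t
    exact ⟨c, by simpa [h0] using hc⟩
  choose σ hσ using hex
  have hadd' : ∀ s t, σ (s + t) = σ s + σ t := by
    intro s t
    have e : (s + t) • w = s • w + t • w := add_smul s t w
    have : σ (s + t) • h w = (σ s + σ t) • h w := by
      rw [← hσ, e, hadd, hσ, hσ, add_smul]
    exact smul_cancel hhwne this
  refine ⟨σ, hσ, ?_, ?_, hadd', ?_, ?_⟩
  · have : σ 0 • h w = (0:ℝ) • h w := by
      rw [← hσ, zero_smul, zero_smul, h0]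
    exact smul_cancel hhwne this
  · have : σ 1 • h w = (1:ℝ) • h w := by
      rw [← hσ, one_smul, one_smul]
    exact smul_cancel hhwne this
  · intro c
    obtain ⟨t, ht⟩ := line_onto hbij hiff 0 w hw hwne c
    simp only [zero_add, h0, zero_sub, sub_zero] at ht
    rw [hσ] at ht
    exact ⟨t, smul_cancel hhwne (by simpa using ht)⟩
  · intro s t hst
    have : h (s • w) = h (t • w) := by rw [hσ, hσ, hst]
    have := hbij.1 this
    exact smul_cancel hwne this

lemma cone_pres (hbij : Function.Bijective h)
    (hiff : ∀ p q : Pt, mQ (p - q) = 0 ↔ mQ (h p - h q) = 0)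
    (h0 : h 0 = 0) (x : Pt) : mQ x = 0 ↔ mQ (h x) = 0 := by
  have := hiff x 0
  rw [h0, sub_zero, sub_zero] at this
  exact this

lemma key_lemma (hbij : Function.Bijective h)
    (hiff : ∀ p q : Pt, mQ (p - q) = 0 ↔ mQ (h p - h q) = 0)
    (h0 : h 0 = 0) (hadd : ∀ p x : Pt, h (p + x) = h p + h x)
    (u v a : Pt) (hu : mQ u = 0) (hv : mQ v = 0) (hune : u ≠ 0) (hvne : v ≠ 0)
    (hnpuv : NPar u v) (hQa : mQ a ≠ 0)
    (hau : mB u a = 0) (hav : mB v a = 0)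
    (σu σv : ℝ → ℝ) (hσu : ∀ t, h (t • u) = σu t • h u) (hσv : ∀ t, h (t • v) = σv t • h v)
    (hσusurj : Function.Surjective σu) (hσvsurj : Function.Surjective σv)
    (t r : ℝ) (ht : t ≠ 0) (hr : r ≠ 0) :
    σu t * σv (r^2 * mQ a / (2 * mB u v) / t) * (2 * mB (h u) (h v)) = mQ (h (r • a)) := by
  have hBuv : mB u v ≠ 0 := npar_mB_ne u v hu hv hune hvne hnpuv
  have hhu : mQ (h u) = 0 := (cone_pres hbij hiff h0 u).mp hu
  have hhv : mQ (h v) = 0 := (cone_pres hbij hiff h0 v).mp hv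
  have hQH : mQ (h (r • a)) ≠ 0 := by
    intro hh
    have : mQ (r • a) = 0 := (cone_pres hbij hiff h0 (r • a)).mpr hh
    rw [mQ_smul] at this
    rcases mul_eq_zero.mp this with hc | hc
    · exact hr (pow_eq_zero_iff (n := 2) (by norm_num) |>.mp hc)
    · exact hQa hc
  have horth : ∀ (x : Pt) (σx : ℝ → ℝ), mQ x = 0 → mB x a = 0 →
      (∀ s, h (s • x) = σx s • h x) → Function.Surjective σx →
      mB (h (r • a)) (h x) = 0 := by
    intro x σx hx hxa hσx hsurj
    by_contra hne
    obtain ⟨s, hs⟩ := hsurj (-(mQ (h (r • a))) / (2 * mB (h (r • a)) (h x)))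
    have hlhs : mQ ((0:Pt) - (r • a + s • x)) ≠ 0 := by
      have e : (0:Pt) - (r • a + s • x) = -(r • a + s • x) := by module
      rw [e, mQ_neg, expand_pair a x r s hx hxa]
      intro hc
      rcases mul_eq_zero.mp hc with hc | hc
      · exact hr (pow_eq_zero_iff (n := 2) (by norm_num) |>.mp hc)
      · exact hQa hc
    apply hlhs
    rw [hiff, h0]
    have e2 : h (r • a + s • x) = h (r • a) + σx s • h x := by
      rw [hadd, hσx]
    have e3 : (0:Pt) - (h (r • a) + σx s • h x) = -(h (r • a) + σx s • h x) := by module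
    rw [e2, e3, mQ_neg, expand1 _ _ _ ((cone_pres hbij hiff h0 x).mp hx), hs]
    field_simp
    ring
  have horthu : mB (h (r • a)) (h u) = 0 := horth u σu hu hau hσu hσusurj
  have horthv : mB (h (r • a)) (h v) = 0 := horth v σv hv hav hσv hσvsurj
  -- the main relation
  obtain ⟨s, hs⟩ : ∃ s : ℝ, s = r^2 * mQ a / (2 * mB u v) / t := ⟨_, rfl⟩
  have hrel : mQ (t • u - (r • a + s • v)) = 0 := by
    rw [expand3 a u v r s t hu hv hau hav, hs]
    field_simp
    ring
  have himgnull : mQ (h (t • u) - h (r • a + s • v)) = 0 := (hiff _ _).mp hrel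
  have e2 : h (r • a + s • v) = h (r • a) + σv s • h v := by rw [hadd, hσv]
  have e4 : σu t • h u - (h (r • a) + σv s • h v)
      = σu t • h u - ((1:ℝ) • h (r • a) + σv s • h v) := by module
  rw [e2, hσu, e4, expand3 (h (r • a)) (h u) (h v) 1 (σv s) (σu t) hhu hhv
    (by rw [mB_symm]; exact horthu) (by rw [mB_symm]; exact horthv)]
    at himgnull
  rw [← hs]
  nlinarith [himgnull]

end Homog

section HomogMain

variable {h : Pt → Pt}

lemma homog_lemma (hbij : Function.Bijective h)
    (hiff : ∀ p q : Pt, mQ (p - q) = 0 ↔ mQ (h p - h q) = 0)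
    (h0 : h 0 = 0) (hadd : ∀ p x : Pt, h (p + x) = h p + h x)
    (v : Pt) (hv : mQ v = 0) (t : ℝ) : h (t • v) = t • h v := by
  by_cases hvne : v = 0
  · rw [hvne, smul_zero, h0, smul_zero]
  obtain ⟨u, hu, hune, hnpuv, hnpvu⟩ := exists_npar v hvne
  obtain ⟨a, hane, hau, hav⟩ := exists_ne_zero_two_forms (mBL u) (mBL v)
  have hau : mB u a = 0 := hau
  have hav : mB v a = 0 := hav
  have hQa : mQ a ≠ 0 := by
    intro hQa0
    obtain ⟨c, hc⟩ := null_orth_par u a hu hQa0 hau hune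
    obtain ⟨c', hc'⟩ := null_orth_par v a hv hQa0 hav hvne
    have hc0 : c ≠ 0 := by rintro rfl; rw [zero_smul] at hc; exact hane hc
    apply hnpuv (c⁻¹ * c')
    have e : u = c⁻¹ • a := by rw [hc, smul_smul, inv_mul_cancel₀ hc0, one_smul]
    rw [e, hc', smul_smul]
  obtain ⟨σu, hσu, hσu0, hσu1, hσuadd, hσusurj, hσuinj⟩ :=
    sigma_exists hbij hiff h0 hadd u hu hune
  obtain ⟨σv, hσv, hσv0, hσv1, hσvadd, hσvsurj, hσvinj⟩ :=
    sigma_exists hbij hiff h0 hadd v hv hvne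
  have hBuv := npar_mB_ne u v hu hv hune hvne hnpuv
  have hKne : mB (h u) (h v) ≠ 0 := by
    intro hB0
    have hhu := (cone_pres hbij hiff h0 u).mp hu
    have hhv := (cone_pres hbij hiff h0 v).mp hv
    have hhune : h u ≠ 0 := fun hh => hune (hbij.1 (by rw [hh, h0]))
    obtain ⟨c, hc⟩ := null_orth_par (h u) (h v) hhu hhv hB0 hhune
    obtain ⟨t0, ht0⟩ := hσusurj c
    have : h (t0 • u) = h v := by rw [hσu, ht0, ← hc]
    exact hnpvu t0 (hbij.1 this).symm
  have hK2 : (2 : ℝ) * mB (h u) (h v) ≠ 0 := mul_ne_zero two_ne_zero hKne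
  obtain ⟨μ, hμ⟩ : ∃ μ : ℝ, μ = mQ a / (2 * mB u v) := ⟨_, rfl⟩
  have hμ0 : μ ≠ 0 := by
    rw [hμ]; exact div_ne_zero hQa (mul_ne_zero two_ne_zero hBuv)
  have key1 : ∀ s r : ℝ, s ≠ 0 → r ≠ 0 →
      σu s * σv (r^2 * μ / s) * (2 * mB (h u) (h v)) = mQ (h (r • a)) := by
    intro s r hs hr
    have e : r^2 * μ / s = r^2 * mQ a / (2 * mB u v) / s := by rw [hμ]; ring
    rw [e]
    exact key_lemma hbij hiff h0 hadd u v a hu hv hune hvne hnpuv hQa hau hav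
      σu σv hσu hσv hσusurj hσvsurj s r hs hr
  have key2 : ∀ s r : ℝ, s ≠ 0 → r ≠ 0 →
      σv s * σu (r^2 * μ / s) * (2 * mB (h u) (h v)) = mQ (h (r • a)) := by
    intro s r hs hr
    have e : r^2 * μ / s = r^2 * mQ a / (2 * mB v u) / s := by rw [hμ, mB_symm v u]; ring
    rw [e, show mB (h u) (h v) = mB (h v) (h u) from mB_symm _ _]
    exact key_lemma hbij hiff h0 hadd v u a hv hu hvne hune hnpvu hQa hav hau
      σv σu hσv hσu hσvsurj hσusurj s r hs hr
  have hray : ∀ r : ℝ, r ≠ 0 → σu (r^2 * μ) = σv (r^2 * μ) := by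
    intro r hr
    have hrμ : r^2 * μ ≠ 0 := mul_ne_zero (pow_ne_zero 2 hr) hμ0
    have h1 := key1 (r^2 * μ) r hrμ hr
    have h2 := key1 1 r one_ne_zero hr
    rw [div_self hrμ, hσv1, mul_one] at h1
    rw [hσu1, div_one, one_mul] at h2
    have := h1.trans h2.symm
    exact mul_right_cancel₀ hK2 this
  have hσuodd : ∀ s : ℝ, σu (-s) = - σu s := by
    intro s
    have := hσuadd s (-s)
    rw [show s + -s = (0:ℝ) by ring, hσu0] at this
    linarith
  have hσvodd : ∀ s : ℝ, σv (-s) = - σv s := by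
    intro s
    have := hσvadd s (-s)
    rw [show s + -s = (0:ℝ) by ring, hσv0] at this
    linarith
  have hμray : ∀ w : ℝ, 0 < w / μ → σu w = σv w := by
    intro w hw
    have hr : Real.sqrt (w / μ) ≠ 0 := by
      intro hh; rw [Real.sqrt_eq_zero' ] at hh; rcases hh with hh; linarith
    have hr2 : (Real.sqrt (w / μ))^2 = w / μ := Real.sq_sqrt hw.le
    have e : (Real.sqrt (w / μ))^2 * μ = w := by rw [hr2]; field_simp
    have := hray (Real.sqrt (w / μ)) hr
    rw [e] at this
    exact this
  have heq : ∀ s : ℝ, σu s = σv s := by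
    have hpos : ∀ s : ℝ, 0 < s → σu s = σv s := by
      intro s hs
      have hμs : μ / s ≠ 0 := div_ne_zero hμ0 hs.ne'
      have hX : σu (μ / s) = σv (μ / s) := by
        apply hμray
        have e : μ / s / μ = 1 / s := by
          field_simp
        rw [e]
        positivity
      have h1 := key1 s 1 hs.ne' one_ne_zero
      have h2 := key2 s 1 hs.ne' one_ne_zero
      rw [one_pow, one_mul] at h1 h2
      rw [← hX] at h1
      have hXne : σu (μ / s) ≠ 0 := by
        intro hh
        have : σu (μ / s) = σu 0 := by rw [hh, hσu0]
        exact hμs (hσuinj this)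
      have := h1.trans h2.symm
      -- σu s * σu (μ/s) * K = σv s * σu (μ/s) * K
      have h3 : σu s * (σu (μ / s) * (2 * mB (h u) (h v)))
          = σv s * (σu (μ / s) * (2 * mB (h u) (h v))) := by
        linear_combination this
      exact mul_right_cancel₀ (mul_ne_zero hXne hK2) h3
    intro s
    rcases lt_trichotomy s 0 with hs | hs | hs
    · have := hpos (-s) (by linarith)
      rw [hσuodd, hσvodd] at this
      linarith
    · rw [hs, hσu0, hσv0]
    · exact hpos s hs
  have hposmul : ∀ x y : ℝ, x ≠ 0 → y ≠ 0 → 0 < x * y / μ → σu (x * y) = σu x * σu y := by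
    intro x y hx hy hxy
    have hr : Real.sqrt (x * y / μ) ≠ 0 := by
      intro hh; rw [Real.sqrt_eq_zero'] at hh; rcases hh with hh; linarith
    have hr2 : (Real.sqrt (x * y / μ))^2 = x * y / μ := Real.sq_sqrt hxy.le
    have hr2μ : (Real.sqrt (x * y / μ))^2 * μ = x * y := by rw [hr2]; field_simp
    have h1 := key1 x (Real.sqrt (x * y / μ)) hx hr
    have h2 := key1 (x * y) (Real.sqrt (x * y / μ)) (mul_ne_zero hx hy) hr
    rw [hr2μ] at h1 h2
    rw [show x * y / x = y by field_simp] at h1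
    rw [div_self (mul_ne_zero hx hy), hσv1, mul_one] at h2
    have := h2.trans h1.symm
    have h3 := mul_right_cancel₀ hK2 this
    rw [h3, heq y]
  have hmul : ∀ x y : ℝ, σu (x * y) = σu x * σu y := by
    intro x y
    by_cases hx : x = 0
    · rw [hx, zero_mul, hσu0, zero_mul]
    by_cases hy : y = 0
    · rw [hy, mul_zero, hσu0, mul_zero]
    rcases lt_trichotomy (x * y / μ) 0 with hneg | hzero | hpos
    · have : 0 < x * (-y) / μ := by
        have e : x * (-y) / μ = -(x * y / μ) := by ring
        rw [e]; linarith
      have := hposmul x (-y) hx (neg_ne_zero.mpr hy) this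
      rw [show x * -y = -(x * y) by ring, hσuodd, hσuodd] at this
      linarith
    · exfalso
      have := div_ne_zero (mul_ne_zero hx hy) hμ0
      exact this hzero
    · exact hposmul x y hx hy hpos
  -- σu is a ring homomorphism, hence the identity
  let F : ℝ →+* ℝ :=
    { toFun := σu, map_one' := hσu1, map_mul' := hmul, map_zero' := hσu0,
      map_add' := hσuadd }
  have hF : F = RingHom.id ℝ := Subsingleton.elim _ _
  have hid : ∀ s : ℝ, σu s = s := fun s => RingHom.congr_fun hF s
  rw [hσv t, ← heq t, hid t]

end HomogMain

section Quad

variable {h : Pt → Pt}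

lemma linear_lemma (hbij : Function.Bijective h)
    (hiff : ∀ p q : Pt, mQ (p - q) = 0 ↔ mQ (h p - h q) = 0)
    (h0 : h 0 = 0) : IsLinearMap ℝ h := by
  have hadd : ∀ p x : Pt, h (p + x) = h p + h x := additive_lemma hbij hiff h0
  refine ⟨fun x y => hadd x y, fun c x => ?_⟩
  obtain ⟨w₁, w₂, hw1, hw2, hsum⟩ := null_decomp x
  have e : c • x = c • w₁ + c • w₂ := by rw [hsum, smul_add]
  rw [e, hadd, homog_lemma hbij hiff h0 hadd w₁ hw1, homog_lemma hbij hiff h0 hadd w₂ hw2,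
    hsum, hadd, smul_add]

lemma expand4 (p q r s : Pt) (a b c d : ℝ) :
    mQ (a • p + b • q + c • r + d • s) =
      a^2 * mQ p + b^2 * mQ q + c^2 * mQ r + d^2 * mQ s
      + 2*a*b*mB p q + 2*a*c*mB p r + 2*a*d*mB p s
      + 2*b*c*mB q r + 2*b*d*mB q s + 2*c*d*mB r s := by
  unfold mQ mB
  simp only [Pi.add_apply, Pi.smul_apply, smul_eq_mul]
  ring

def E0 : Pt := mk4 1 0 0 0
def E1 : Pt := mk4 0 1 0 0
def E2 : Pt := mk4 0 0 1 0
def E3 : Pt := mk4 0 0 0 1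

lemma pt_decomp (x : Pt) : x = x 0 • E0 + x 1 • E1 + x 2 • E2 + x 3 • E3 := by
  refine pt_ext ?_ ?_ ?_ ?_ <;>
    simp [E0, E1, E2, E3, Pi.add_apply, Pi.smul_apply]

lemma quad_lemma (hbij : Function.Bijective h)
    (hiff : ∀ p q : Pt, mQ (p - q) = 0 ↔ mQ (h p - h q) = 0)
    (h0 : h 0 = 0) (hlin : IsLinearMap ℝ h) (x : Pt) :
    mQ (h x) = mQ (h E0) * mQ x := by
  have hcone := cone_pres hbij hiff h0
  obtain ⟨k, hk⟩ : ∃ k : ℝ, k = mQ (h E0) := ⟨_, rfl⟩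
  -- basic combination expansion
  have hcomb : ∀ (a b c d : ℝ), h (a • E0 + b • E1 + c • E2 + d • E3)
      = a • h E0 + b • h E1 + c • h E2 + d • h E3 := by
    intro a b c d
    rw [hlin.map_add, hlin.map_add, hlin.map_add, hlin.map_smul, hlin.map_smul,
      hlin.map_smul, hlin.map_smul]
  -- null basis combinations
  have hnull : ∀ (a b c d : ℝ), a^2 = b^2 + c^2 + d^2 →
      mQ (a • h E0 + b • h E1 + c • h E2 + d • h E3) = 0 := by
    intro a b c d habcd
    rw [← hcomb]
    rw [← hcone]
    unfold mQ mB E0 E1 E2 E3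
    simp only [Pi.add_apply, Pi.smul_apply, smul_eq_mul, mk4_0, mk4_1, mk4_2, mk4_3]
    linear_combination habcd
  -- derive the bilinear values
  have hQ1 : mQ (h E1) = -k := by
    have p1 := hnull 1 1 0 0 (by norm_num)
    have p2 := hnull 1 (-1) 0 0 (by norm_num)
    rw [expand4] at p1 p2
    rw [hk]; linarith
  have hQ2 : mQ (h E2) = -k := by
    have p1 := hnull 1 0 1 0 (by norm_num)
    have p2 := hnull 1 0 (-1) 0 (by norm_num)
    rw [expand4] at p1 p2
    rw [hk]; linarith
  have hQ3 : mQ (h E3) = -k := by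
    have p1 := hnull 1 0 0 1 (by norm_num)
    have p2 := hnull 1 0 0 (-1) (by norm_num)
    rw [expand4] at p1 p2
    rw [hk]; linarith
  have hB01 : mB (h E0) (h E1) = 0 := by
    have p1 := hnull 1 1 0 0 (by norm_num)
    have p2 := hnull 1 (-1) 0 0 (by norm_num)
    rw [expand4] at p1 p2
    linarith
  have hB02 : mB (h E0) (h E2) = 0 := by
    have p1 := hnull 1 0 1 0 (by norm_num)
    have p2 := hnull 1 0 (-1) 0 (by norm_num)
    rw [expand4] at p1 p2
    linarith
  have hB03 : mB (h E0) (h E3) = 0 := by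
    have p1 := hnull 1 0 0 1 (by norm_num)
    have p2 := hnull 1 0 0 (-1) (by norm_num)
    rw [expand4] at p1 p2
    linarith
  have hB12 : mB (h E1) (h E2) = 0 := by
    have p1 := hnull 5 3 4 0 (by norm_num)
    rw [expand4] at p1
    rw [← hk] at *
    nlinarith [hQ1, hQ2, hB01, hB02, p1]
  have hB13 : mB (h E1) (h E3) = 0 := by
    have p1 := hnull 5 3 0 4 (by norm_num)
    rw [expand4] at p1
    rw [← hk] at *
    nlinarith [hQ1, hQ3, hB01, hB03, p1]
  have hB23 : mB (h E2) (h E3) = 0 := by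
    have p1 := hnull 5 0 3 4 (by norm_num)
    rw [expand4] at p1
    rw [← hk] at *
    nlinarith [hQ2, hQ3, hB02, hB03, p1]
  -- conclude
  have hx := pt_decomp x
  have e1 : mQ (h x) = mQ (x 0 • h E0 + x 1 • h E1 + x 2 • h E2 + x 3 • h E3) := by
    rw [← hcomb, ← hx]
  have e2 : mQ x = x 0 ^2 - x 1^2 - x 2^2 - x 3^2 := by
    unfold mQ mB; ring
  rw [e1, expand4, hQ1, hQ2, hQ3, hB01, hB02, hB03, hB12, hB13, hB23, e2, ← hk]
  ring

lemma k_pos (hbij : Function.Bijective h)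
    (hiff : ∀ p q : Pt, mQ (p - q) = 0 ↔ mQ (h p - h q) = 0)
    (h0 : h 0 = 0) (hlin : IsLinearMap ℝ h) : 0 < mQ (h E0) := by
  have hquad := quad_lemma hbij hiff h0 hlin
  obtain ⟨k, hk⟩ : ∃ k : ℝ, k = mQ (h E0) := ⟨_, rfl⟩
  have hkne : k ≠ 0 := by
    intro hk0
    obtain ⟨x, hx⟩ := hbij.2 E0
    have := hquad x
    rw [hx, ← hk, hk0, zero_mul] at this
    have hE0 : mQ E0 = 1 := by unfold mQ mB E0; simp
    rw [hE0] at this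
    exact one_ne_zero this
  -- find x ≠ 0 with x 0 = 0 and (h x) 0 = 0
  obtain ⟨x, hxne, hx0, hhx0⟩ :=
    exists_ne_zero_two_forms (LinearMap.proj 0)
      ((LinearMap.proj 0).comp (IsLinearMap.mk' h hlin))
  simp only [LinearMap.proj_apply, LinearMap.comp_apply, IsLinearMap.mk'_apply] at hx0 hhx0
  have hhxne : h x ≠ 0 := by
    intro hh
    exact hxne (hbij.1 (by rw [hh, h0]))
  have hmQx : mQ x < 0 := by
    have hd : dot3 x x ≠ 0 := by
      intro hd0
      obtain ⟨h1, h2, h3⟩ := dot3_eq_zero hd0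
      exact hxne (pt_ext (by simpa using hx0) (by simpa using h1) (by simpa using h2)
        (by simpa using h3))
    have hdpos : 0 < dot3 x x := lt_of_le_of_ne (dot3_nonneg x) (Ne.symm hd)
    have : mQ x = x 0 * x 0 - dot3 x x := by unfold mQ mB dot3; ring
    rw [this, hx0]; linarith
  have hmQhx : mQ (h x) < 0 := by
    have hd : dot3 (h x) (h x) ≠ 0 := by
      intro hd0
      obtain ⟨h1, h2, h3⟩ := dot3_eq_zero hd0
      exact hhxne (pt_ext (by simpa using hhx0) (by simpa using h1) (by simpa using h2)
        (by simpa using h3))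
    have hdpos : 0 < dot3 (h x) (h x) := lt_of_le_of_ne (dot3_nonneg (h x)) (Ne.symm hd)
    have : mQ (h x) = (h x) 0 * (h x) 0 - dot3 (h x) (h x) := by unfold mQ mB dot3; ring
    rw [this, hhx0]; linarith
  have := hquad x
  rw [← hk] at this ⊢
  nlinarith [this, hmQx, hmQhx]

end Quad


lemma mQ_eq_sqMink (p : Pt) : mQ p = sqMink p := by
  unfold mQ mB sqMink; ring

lemma lin_sub {L : Pt → Pt} (hL : IsLinearMap ℝ L) (x y : Pt) :
    L (x - y) = L x - L y := by
  have e : x - y = x + (-1 : ℝ) • y := by module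
  rw [e, hL.map_add, hL.map_smul]
  module

end AZ

/-- **Alexandrov–Zeeman theorem.** A bijection of ℝ⁴ respects lightlike relatedness
if and only if it is a composition of a scaling and a Poincaré transformation;
that is, Aut(RelST) = Scal ∘ Poi. -/
theorem alexandrov_zeeman (f : Pt → Pt) (hf : Function.Bijective f) :
    (∀ p q : Pt, lightlike p q ↔ lightlike (f p) (f q)) ↔
      ∃ D ∈ Scal, ∃ P ∈ Poi, f = D ∘ P := by
  constructor
  · -- hard direction
    intro hiffl
    obtain ⟨h, hh⟩ : ∃ h : Pt → Pt, h = fun p => f p - f 0 := ⟨_, rfl⟩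
    have hbij : Function.Bijective h := by
      constructor
      · intro p q hpq
        rw [hh] at hpq
        simp only [sub_left_inj] at hpq
        exact hf.1 hpq
      · intro y
        obtain ⟨x, hx⟩ := hf.2 (y + f 0)
        exact ⟨x, by rw [hh]; simp [hx]⟩
    have hiff : ∀ p q : Pt, AZ.mQ (p - q) = 0 ↔ AZ.mQ (h p - h q) = 0 := by
      intro p q
      have e : h p - h q = f p - f q := by rw [hh]; module
      rw [e, ← AZ.lightlike_iff, ← AZ.lightlike_iff]
      exact hiffl p q
    have h0 : h 0 = 0 := by rw [hh]; simp
    have hlin : IsLinearMap ℝ h := AZ.linear_lemma hbij hiff h0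
    have hquad := AZ.quad_lemma hbij hiff h0 hlin
    have hkpos := AZ.k_pos hbij hiff h0 hlin
    obtain ⟨k, hk⟩ : ∃ k : ℝ, k = AZ.mQ (h AZ.E0) := ⟨_, rfl⟩
    rw [← hk] at hkpos
    obtain ⟨a, ha⟩ : ∃ a : ℝ, a = Real.sqrt k := ⟨_, rfl⟩
    have hapos : 0 < a := by rw [ha]; exact Real.sqrt_pos.mpr hkpos
    have ha2 : a ^ 2 = k := by rw [ha]; exact Real.sq_sqrt hkpos.le
    have hane : a ≠ 0 := hapos.ne'
    obtain ⟨L, hL⟩ : ∃ L : Pt → Pt, L = fun p => a⁻¹ • h p := ⟨_, rfl⟩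
    refine ⟨fun p => a • p, ⟨a, hane, fun p => rfl⟩,
      fun p => L p + a⁻¹ • f 0, ⟨fun p => p + a⁻¹ • f 0, L,
        ⟨a⁻¹ • f 0, fun p => rfl⟩, ⟨?_, ?_, ?_⟩, rfl⟩, ?_⟩
    · -- L linear
      constructor
      · intro x y; rw [hL]; simp only [hlin.map_add]; module
      · intro c x; rw [hL]; simp only [hlin.map_smul]
        rw [smul_comm]
    · -- L bijective
      constructor
      · intro p q hpq
        rw [hL] at hpq
        simp only at hpq
        have := smul_right_injective Pt (inv_ne_zero hane) hpq
        exact hbij.1 this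
      · intro y
        obtain ⟨x, hx⟩ := hbij.2 (a • y)
        refine ⟨x, ?_⟩
        rw [hL]; simp only [hx, smul_smul, inv_mul_cancel₀ hane, one_smul]
    · -- L preserves sqMink
      intro p
      rw [← AZ.mQ_eq_sqMink, ← AZ.mQ_eq_sqMink, hL]
      simp only
      rw [AZ.mQ_smul, hquad p, ← hk]
      field_simp
      rw [← ha2]
    · -- f = D ∘ P
      funext p
      simp only [Function.comp_apply]
      rw [hL]
      simp only
      rw [smul_add, smul_smul, mul_inv_cancel₀ hane, one_smul, smul_smul,
        mul_inv_cancel₀ hane, one_smul, hh]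
      simp
  · -- easy direction
    rintro ⟨D, ⟨a, ha0, hD⟩, P, ⟨τ, L, ⟨b, hb⟩, ⟨hLlin, hLbij, hLQ⟩, hP⟩, hfDP⟩
    intro p q
    have e : f p - f q = a • L (p - q) := by
      rw [hfDP]
      simp only [Function.comp_apply]
      rw [hD, hD, hP]
      simp only [Function.comp_apply]
      rw [hb, hb, AZ.lin_sub hLlin]
      module
    rw [AZ.lightlike_iff, AZ.lightlike_iff, e, AZ.mQ_smul]
    have hLQ' : AZ.mQ (L (p - q)) = AZ.mQ (p - q) := by
      rw [AZ.mQ_eq_sqMink, AZ.mQ_eq_sqMink, hLQ]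
    rw [hLQ']
    constructor
    · intro hq; rw [hq, mul_zero]
    · intro hq
      rcases mul_eq_zero.mp hq with hc | hc
      · exact absurd (pow_eq_zero_iff (n := 2) (by norm_num) |>.mp hc) ha0
      · exact hc
end

section
/- The automorphism group of late classical spacetime equals the set of compositions of scalings with trivial transformations: a bijection f : ℝ⁴ → ℝ⁴ respects both lightlike relatedness λ and absolute simultaneity S if and only if f = D ∘ T for some scaling D and trivial transformation T. -/
noncomputable section
abbrev E3 : Type := EuclideanSpace ℝ (Fin 3)

def tl (p : Pt) : E3 := WithLp.toLp 2 (fun i : Fin 3 => p i.succ)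
def cns (t : ℝ) (v : E3) : Pt := Fin.cons t v

@[simp] lemma cns_zero (t : ℝ) (v : E3) : cns t v 0 = t := rfl
@[simp] lemma tl_cns (t : ℝ) (v : E3) : tl (cns t v) = v := rfl
@[simp] lemma cns_tl (p : Pt) : cns (p 0) (tl p) = p := by
  funext i; exact Fin.cases rfl (fun j => rfl) i
@[simp] lemma cns_one (t : ℝ) (v : E3) : cns t v 1 = v 0 := rfl
@[simp] lemma cns_two (t : ℝ) (v : E3) : cns t v 2 = v 1 := rfl
@[simp] lemma cns_three (t : ℝ) (v : E3) : cns t v 3 = v 2 := rfl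
@[simp] lemma tl_apply0 (p : Pt) : tl p 0 = p 1 := rfl
@[simp] lemma tl_apply1 (p : Pt) : tl p 1 = p 2 := rfl
@[simp] lemma tl_apply2 (p : Pt) : tl p 2 = p 3 := rfl

lemma dist_E3 (v w : E3) :
    dist v w = Real.sqrt ((v 0 - w 0)^2 + (v 1 - w 1)^2 + (v 2 - w 2)^2) := by
  rw [EuclideanSpace.dist_eq, Fin.sum_univ_three]
  simp [Real.dist_eq, sq_abs]

lemma norm_E3 (v : E3) : ‖v‖^2 = v 0 ^2 + v 1 ^2 + v 2 ^2 := by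
  rw [EuclideanSpace.norm_eq, Fin.sum_univ_three]
  rw [Real.sq_sqrt (by positivity)]
  simp [sq_abs]

lemma lightlike_iff (p q : Pt) : lightlike p q ↔ |p 0 - q 0| = dist (tl p) (tl q) := by
  rw [dist_E3, lightlike]
  simp only [tl_apply0, tl_apply1, tl_apply2]
  constructor
  · intro h; rw [← h, Real.sqrt_sq_eq_abs]
  · intro h
    have h2 : |p 0 - q 0|^2 = (p 1 - q 1) ^ 2 + (p 2 - q 2) ^ 2 + (p 3 - q 3) ^ 2 := by
      rw [h, Real.sq_sqrt (by positivity)]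
    rwa [sq_abs] at h2

lemma dist_smul_single (v : E3) (d : ℝ) :
    dist (v + d • EuclideanSpace.single (0 : Fin 3) (1:ℝ)) v = |d| := by
  rw [dist_eq_norm]
  simp [norm_smul, abs_of_nonneg]

lemma inner_eq_zero_of_norm_add_eq_norm_sub {E : Type*} [NormedAddCommGroup E]
    [InnerProductSpace ℝ E] {w x : E} (h : ‖w + x‖ = ‖w - x‖) : inner ℝ w x = (0:ℝ) := by
  have h2 : ‖w + x‖^2 = ‖w - x‖^2 := by rw [h]
  rw [norm_add_sq_real, norm_sub_sq_real] at h2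
  linarith

lemma center_eq_of_sphere_subset {A B : E3} {r r' : ℝ} (hr : 0 < r)
    (h : ∀ C : E3, dist C A = r → dist C B = r') : A = B := by
  by_contra hne
  set w := A - B with hw
  have hwne : w ≠ 0 := sub_ne_zero.2 hne
  have key : ∀ u : E3, ‖u‖ = 1 → inner ℝ w u = (0:ℝ) := by
    intro u hu
    have h1 : dist (A + r • u) A = r := by
      rw [dist_eq_norm]; simp [norm_smul, abs_of_pos hr, hu]
    have h2 : dist (A - r • u) A = r := by
      rw [dist_eq_norm]; simp [norm_smul, abs_of_pos hr, hu]
    have e1 := h _ h1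
    have e2 := h _ h2
    rw [dist_eq_norm] at e1 e2
    have v1 : A + r • u - B = w + r • u := by rw [hw]; abel
    have v2 : A - r • u - B = w - r • u := by rw [hw]; abel
    rw [v1] at e1; rw [v2] at e2
    have hinner := inner_eq_zero_of_norm_add_eq_norm_sub (e1.trans e2.symm)
    rw [real_inner_smul_right] at hinner
    rcases mul_eq_zero.1 hinner with h' | h'
    · exact absurd h' (ne_of_gt hr)
    · exact h'
  have hnp : 0 < ‖w‖ := norm_pos_iff.2 hwne
  have := key (‖w‖⁻¹ • w) (by
    simp [norm_smul, inv_mul_cancel₀ (norm_ne_zero_iff.2 hwne)])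
  rw [real_inner_smul_right, real_inner_self_eq_norm_sq] at this
  have h3 : ‖w‖⁻¹ * ‖w‖^2 = ‖w‖ := by field_simp [pow_two]
  rw [h3] at this
  exact hwne (norm_eq_zero.1 this)


lemma exists_unit_orthogonal (u : E3) : ∃ e : E3, ‖e‖ = 1 ∧ inner ℝ u e = (0:ℝ) := by
  have hfr : Module.finrank ℝ E3 = 3 := finrank_euclideanSpace_fin
  set K : Submodule ℝ E3 := ℝ ∙ u with hK
  have h1 : Module.finrank ℝ K ≤ 1 := by
    rcases eq_or_ne u 0 with h | h
    · rw [hK, h, Submodule.span_zero_singleton]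
      simp
    · rw [hK, finrank_span_singleton h]
  have h2 := Submodule.finrank_add_finrank_orthogonal (K := K) (𝕜 := ℝ) (E := E3)
  have h3 : 0 < Module.finrank ℝ Kᗮ := by omega
  have h4 : Kᗮ ≠ ⊥ := by
    intro hbot
    rw [hbot] at h3; simp at h3
  obtain ⟨e', he'K, he'0⟩ := Submodule.exists_mem_ne_zero_of_ne_bot h4
  refine ⟨‖e'‖⁻¹ • e', ?_, ?_⟩
  · simp [norm_smul, inv_mul_cancel₀ (norm_ne_zero_iff.2 he'0)]
  · have : inner ℝ u e' = (0:ℝ) :=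
      (Submodule.mem_orthogonal K e').1 he'K u (Submodule.mem_span_singleton_self u)
    rw [real_inner_smul_right, this, mul_zero]

lemma between_unique {A B C : E3} {a b : ℝ} (ha : 0 < a) (hb : 0 < b)
    (hAB : dist A B = a + b) (hAC : dist A C = a) (hCB : dist C B = b) :
    C = A + (a / (a + b)) • (B - A) := by
  have hx : ‖(C - A) + (B - C)‖ = ‖C - A‖ + ‖B - C‖ := by
    have h1 : (C - A) + (B - C) = B - A := by abel
    rw [h1, ← dist_eq_norm B A, dist_comm B A, hAB, ← dist_eq_norm C A, dist_comm C A, hAC,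
      ← dist_eq_norm B C, dist_comm B C, hCB]
  have hray : SameRay ℝ (C - A) (B - C) := sameRay_iff_norm_add.2 hx
  have hCA : C - A ≠ 0 := by
    intro h0
    rw [sub_eq_zero] at h0
    rw [h0, dist_self] at hAC; linarith
  obtain ⟨r, hr0, hr⟩ := hray.exists_nonneg_left hCA
  -- r • (C - A) = B - C ; ‖B - C‖ = b, ‖C - A‖ = a ⇒ r = b / a
  have hnCA : ‖C - A‖ = a := by rw [← dist_eq_norm C A, dist_comm C A, hAC]
  have hnBC : ‖B - C‖ = b := by rw [← dist_eq_norm B C, dist_comm B C, hCB]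
  have hrval : r = b / a := by
    have := congrArg norm hr
    rw [norm_smul, hnCA, hnBC, Real.norm_eq_abs, abs_of_nonneg hr0] at this
    field_simp at this ⊢
    linarith
  have hBA : B - A = (1 + r) • (C - A) := by
    have : B - A = (C - A) + (B - C) := by abel
    rw [this, ← hr, add_smul, one_smul]
  have h1r : (1 + r) = (a + b) / a := by rw [hrval]; field_simp
  have hab : a + b ≠ 0 := by positivity
  have : (a / (a + b)) • (B - A) = C - A := by
    rw [hBA, h1r, smul_smul]
    have : a / (a + b) * ((a + b) / a) = 1 := by field_simp
    rw [this, one_smul]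
  rw [this]; abel


/-- Given centers at distance `D` and radii `a`, `b` satisfying the triangle condition,
the two spheres intersect; if the condition is strict, in at least two points. -/
lemma exists_inter (A B : E3) (a b D : ℝ) (ha : 0 < a) (hb : 0 < b) (hD : 0 < D)
    (hAB : dist A B = D) (h1 : |a - b| ≤ D) (h2 : D ≤ a + b) :
    ∃ C C' : E3, dist A C = a ∧ dist B C = b ∧ dist A C' = a ∧ dist B C' = b ∧
      (|a - b| < D → D < a + b → C ≠ C') := by
  obtain ⟨h1a, h1b⟩ := abs_le.1 h1
  set u : E3 := D⁻¹ • (B - A) with hu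
  have hDne : D ≠ 0 := ne_of_gt hD
  have hBAnorm : ‖B - A‖ = D := by rw [← dist_eq_norm B A, dist_comm B A, hAB]
  have hunorm : ‖u‖ = 1 := by
    rw [hu, norm_smul, hBAnorm, Real.norm_eq_abs, abs_of_pos (inv_pos.2 hD), inv_mul_cancel₀ hDne]
  obtain ⟨e, henorm, heu⟩ := exists_unit_orthogonal u
  set x : ℝ := (D^2 + a^2 - b^2) / (2*D) with hx
  have hxval : 2*D*x = D^2 + a^2 - b^2 := by rw [hx]; field_simp
  have hkey : 0 ≤ a^2 - x^2 := by
    have hprod : 0 ≤ (b + D - a) * (a + D - b) * ((a + b - D) * (a + b + D)) := by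
      have f1 : 0 ≤ b + D - a := by linarith
      have f2 : 0 ≤ a + D - b := by linarith
      have f3 : 0 ≤ a + b - D := by linarith
      have f4 : 0 ≤ a + b + D := by linarith
      exact mul_nonneg (mul_nonneg f1 f2) (mul_nonneg f3 f4)
    nlinarith [sq_nonneg D, mul_pos hD hD, hxval]
  set y : ℝ := Real.sqrt (a^2 - x^2) with hy
  have hy2 : y^2 = a^2 - x^2 := Real.sq_sqrt hkey
  have hynn : 0 ≤ y := Real.sqrt_nonneg _
  have hDu : A + D • u = B := by
    rw [hu, smul_smul, mul_inv_cancel₀ hDne, one_smul]; abel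
  clear_value u
  have hnormsq : ∀ s : ℝ, ∀ z : ℝ, ‖z • u + s • e‖^2 = z^2 + s^2 := by
    intro s z
    rw [norm_add_sq_real, real_inner_smul_left, real_inner_smul_right, heu, norm_smul,
      norm_smul, hunorm, henorm]
    simp [Real.norm_eq_abs, sq_abs]
  have key : ∀ s : ℝ, s^2 = y^2 → dist A (A + (x • u + s • e)) = a ∧
      dist B (A + (x • u + s • e)) = b := by
    intro s hs
    constructor
    · rw [dist_self_add_right]
      have hsq : ‖x • u + s • e‖^2 = a^2 := by rw [hnormsq, hs, hy2]; ring
      calc ‖x • u + s • e‖ = Real.sqrt (‖x • u + s • e‖^2) := (Real.sqrt_sq (norm_nonneg _)).symm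
        _ = Real.sqrt (a^2) := by rw [hsq]
        _ = a := Real.sqrt_sq ha.le
    · have hvec : A + (x • u + s • e) - B = (x - D) • u + s • e := by
        rw [← hDu, sub_smul]; abel
      rw [dist_comm, dist_eq_norm, hvec]
      have hsq : ‖(x - D) • u + s • e‖^2 = b^2 := by
        rw [hnormsq, hs, hy2]
        linear_combination (-1 : ℝ) * hxval
      calc ‖(x-D) • u + s • e‖ = Real.sqrt (‖(x-D) • u + s • e‖^2) :=
            (Real.sqrt_sq (norm_nonneg _)).symm
        _ = Real.sqrt (b^2) := by rw [hsq]
        _ = b := Real.sqrt_sq hb.le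
  have hminus : x • u - y • e = x • u + (-y) • e := by rw [neg_smul]; abel
  obtain ⟨k1, k2⟩ := key y rfl
  obtain ⟨k3, k4⟩ := key (-y) (by ring)
  rw [← hminus] at k3 k4
  refine ⟨A + (x • u + y • e), A + (x • u - y • e), k1, k2, k3, k4, ?_⟩
  intro hs1 hs2
  have hypos : 0 < y := by
    rw [hy]
    apply Real.sqrt_pos.2
    have hprod : 0 < (b + D - a) * (a + D - b) * ((a + b - D) * (a + b + D)) := by
      obtain ⟨g1a, g1b⟩ := abs_lt.1 hs1
      have f1 : 0 < b + D - a := by linarith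
      have f2 : 0 < a + D - b := by linarith
      have f3 : 0 < a + b - D := by linarith
      have f4 : 0 < a + b + D := by linarith
      exact mul_pos (mul_pos f1 f2) (mul_pos f3 f4)
    nlinarith [mul_pos hD hD, hxval]
  intro hCC
  have hCC' := add_left_cancel hCC
  have h2y : (2*y) • e = 0 := by
    have hh : x • u + y • e - (x • u - y • e) = (2*y) • e := by
      rw [two_mul, add_smul]; abel
    rw [← hh, hCC']; abel
  have hene : e ≠ 0 := by
    intro h0; rw [h0, norm_zero] at henorm; norm_num at henorm
  rcases smul_eq_zero.1 h2y with h' | h'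
  · linarith
  · exact hene h'

lemma dist_zero_single (d : ℝ) (hd : 0 ≤ d) :
    dist (0 : E3) (d • EuclideanSpace.single (0 : Fin 3) (1:ℝ)) = d := by
  rw [dist_eq_norm]
  simp [norm_smul, abs_of_nonneg hd]

lemma dist_single_single' (s t : ℝ) :
    dist (s • EuclideanSpace.single (0 : Fin 3) (1:ℝ))
      (t • EuclideanSpace.single (0 : Fin 3) (1:ℝ)) = |s - t| := by
  rw [dist_eq_norm, ← sub_smul]
  simp [norm_smul]

lemma abstract_linearity (g : ℝ → ℝ) (Φ : E3 → E3) (hg : Function.Injective g)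
    (hΦ : Function.Surjective Φ)
    (hm : ∀ t s : ℝ, ∀ v w : E3, |t - s| = dist v w ↔ |g t - g s| = dist (Φ v) (Φ w)) :
    ∃ c > 0, ∃ δ : ℝ, δ^2 = 1 ∧ (∀ v w : E3, dist (Φ v) (Φ w) = c * dist v w) ∧
      (∀ t, g t = g 0 + δ * c * t) := by
  set sg : E3 := EuclideanSpace.single (0 : Fin 3) (1:ℝ) with hsg
  set ρ : ℝ → ℝ := fun d => |g d - g 0| with hρ
  have hρ0 : ρ 0 = 0 := by simp [hρ]
  have ρdist : ∀ v w : E3, dist (Φ v) (Φ w) = ρ (dist v w) := by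
    intro v w
    exact ((hm (dist v w) 0 v w).mp (by rw [sub_zero, abs_of_nonneg dist_nonneg])).symm
  have ρinj : ∀ d d' : ℝ, 0 ≤ d → 0 ≤ d' → ρ d = ρ d' → d = d' := by
    intro d d' hd hd' hdd
    have h := (hm d' 0 (0 : E3) (d • sg)).mpr (by
      rw [ρdist, dist_zero_single d hd]; exact hdd.symm)
    rw [dist_zero_single d hd, sub_zero, abs_of_nonneg hd'] at h
    exact h.symm
  have ρpos : ∀ d : ℝ, 0 < d → 0 < ρ d := by
    intro d hd
    rcases (abs_nonneg (g d - g 0)).lt_or_eq with h | h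
    · exact h
    · exfalso
      have : g d = g 0 := by
        have := abs_eq_zero.1 h.symm; linarith
      have := hg this; linarith
  have half1 : ∀ a D : ℝ, 0 < a → 0 < D → D ≤ 2*a → ρ D ≤ 2 * ρ a := by
    intro a D ha hD hDa
    obtain ⟨C, C', hC1, hC2, -, -, -⟩ := exists_inter (0 : E3) (D • sg) a a D ha ha hD
      (dist_zero_single D hD.le) (by simp; linarith) (by linarith)
    calc ρ D = dist (Φ 0) (Φ (D • sg)) := by rw [ρdist, dist_zero_single D hD.le]
      _ ≤ dist (Φ 0) (Φ C) + dist (Φ C) (Φ (D • sg)) := dist_triangle _ _ _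
      _ = ρ (dist (0:E3) C) + ρ (dist C (D • sg)) := by rw [ρdist, ρdist]
      _ = ρ a + ρ a := by rw [hC1, dist_comm C (D • sg), hC2]
      _ = 2 * ρ a := by ring
  have half2 : ∀ a D : ℝ, 0 < a → 0 < D → ρ D ≤ 2 * ρ a → D ≤ 2*a := by
    intro a D ha hD hra
    have hAB : dist (Φ 0) (Φ (D • sg)) = ρ D := by
      rw [ρdist, dist_zero_single D hD.le]
    obtain ⟨C, C', hC1, hC2, -, -, -⟩ := exists_inter (Φ 0) (Φ (D • sg)) (ρ a) (ρ a) (ρ D)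
      (ρpos a ha) (ρpos a ha) (ρpos D hD) hAB (by simp [le_of_lt (ρpos D hD)])
      (by linarith)
    obtain ⟨q, hq⟩ := hΦ C
    rw [← hq] at hC1 hC2
    have d1 : dist (0:E3) q = a := ρinj _ _ dist_nonneg ha.le (by rw [← ρdist, hC1])
    have d2 : dist q (D • sg) = a := by
      have : ρ (dist q (D • sg)) = ρ a := by rw [← ρdist, dist_comm (Φ q), hC2]
      exact ρinj _ _ dist_nonneg ha.le this
    calc D = dist (0:E3) (D • sg) := (dist_zero_single D hD.le).symm
      _ ≤ dist (0:E3) q + dist q (D • sg) := dist_triangle _ _ _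
      _ = 2*a := by rw [d1, d2]; ring
  have smono : ∀ d e : ℝ, 0 < e → e < d → ρ e < ρ d := by
    intro d e he hed
    by_contra hcon
    push_neg at hcon
    have h1 : ρ e ≤ 2 * ρ (e/2) := half1 (e/2) e (by linarith) he (by linarith)
    have h2 : ρ d ≤ 2 * ρ (e/2) := le_trans hcon h1
    have := half2 (e/2) d (by linarith) (by linarith) h2
    linarith
  have addle : ∀ a b : ℝ, 0 < a → 0 < b → ρ (a+b) ≤ ρ a + ρ b := by
    intro a b ha hb
    calc ρ (a+b) = dist (Φ 0) (Φ ((a+b) • sg)) := by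
          rw [ρdist, dist_zero_single (a+b) (by linarith)]
      _ ≤ dist (Φ 0) (Φ (a • sg)) + dist (Φ (a • sg)) (Φ ((a+b) • sg)) := dist_triangle _ _ _
      _ = ρ (dist (0:E3) (a • sg)) + ρ (dist (a • sg) ((a+b) • sg)) := by rw [ρdist, ρdist]
      _ = ρ a + ρ b := by
          rw [dist_zero_single a ha.le, dist_single_single']
          congr 2
          rw [abs_of_nonpos (by linarith)]; ring
  have addρ : ∀ a b : ℝ, 0 < a → 0 < b → ρ (a+b) = ρ a + ρ b := by
    intro a b ha hb
    refine le_antisymm (addle a b ha hb) ?_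
    by_contra hcon
    push_neg at hcon
    have hab : (0:ℝ) < a + b := by linarith
    have hAB : dist (Φ 0) (Φ ((a+b) • sg)) = ρ (a+b) := by
      rw [ρdist, dist_zero_single (a+b) hab.le]
    have s1 : ρ a < ρ (a+b) := smono (a+b) a ha (by linarith)
    have s2 : ρ b < ρ (a+b) := smono (a+b) b hb (by linarith)
    have hlow : |ρ a - ρ b| < ρ (a+b) := by
      rw [abs_lt]
      constructor <;> nlinarith [ρpos a ha, ρpos b hb]
    obtain ⟨C, C', hC1, hC2, hC3, hC4, hCC⟩ := exists_inter (Φ 0) (Φ ((a+b) • sg))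
      (ρ a) (ρ b) (ρ (a+b)) (ρpos a ha) (ρpos b hb) (ρpos _ hab) hAB hlow.le hcon.le
    obtain ⟨q, hq⟩ := hΦ C
    obtain ⟨q', hq'⟩ := hΦ C'
    rw [← hq] at hC1 hC2
    rw [← hq'] at hC3 hC4
    have d1 : dist (0:E3) q = a := ρinj _ _ dist_nonneg ha.le (by rw [← ρdist, hC1])
    have d2 : dist q ((a+b) • sg) = b := by
      have : ρ (dist q ((a+b) • sg)) = ρ b := by rw [← ρdist, dist_comm (Φ q), hC2]
      exact ρinj _ _ dist_nonneg hb.le this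
    have d3 : dist (0:E3) q' = a := ρinj _ _ dist_nonneg ha.le (by rw [← ρdist, hC3])
    have d4 : dist q' ((a+b) • sg) = b := by
      have : ρ (dist q' ((a+b) • sg)) = ρ b := by rw [← ρdist, dist_comm (Φ q'), hC4]
      exact ρinj _ _ dist_nonneg hb.le this
    have hb1 := between_unique ha hb (dist_zero_single (a+b) hab.le) d1 d2
    have hb2 := between_unique ha hb (dist_zero_single (a+b) hab.le) d3 d4
    have : q = q' := by rw [hb1, hb2]
    exact (hCC hlow hcon) (by rw [← hq, ← hq', this])
  -- ρ is linear on nonneg reals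
  have natmul : ∀ n : ℕ, ∀ d : ℝ, 0 < d → ρ ((n+1) * d) = (n+1) * ρ d := by
    intro n
    induction n with
    | zero => intro d hd; norm_num
    | succ k ih =>
      intro d hd
      have h1 : ((k:ℝ)+1+1) * d = ((k:ℝ)+1)*d + d := by ring
      have h2 : ρ (((k:ℝ)+1)*d + d) = ρ (((k:ℝ)+1)*d) + ρ d :=
        addρ _ _ (by positivity) hd
      push_cast
      rw [h1, h2, ih d hd]
      ring
  set c : ℝ := ρ 1 with hc
  have hcpos : 0 < c := ρpos 1 one_pos
  clear_value c
  have ratmul : ∀ q : ℚ, 0 < q → ρ (q:ℝ) = c * (q:ℝ) := by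
    intro q hq
    have hqR : (0:ℝ) < (q:ℝ) := by exact_mod_cast hq
    have hden : 0 < q.den := q.pos
    obtain ⟨k, hk⟩ := Nat.exists_eq_succ_of_ne_zero (Nat.pos_iff_ne_zero.1 hden)
    have hnum : 0 < q.num := Rat.num_pos.2 hq
    have hdenR : (q.den : ℝ) = (k:ℝ) + 1 := by rw [hk]; push_cast; ring
    have e1 : ρ ((q.den:ℝ) * (q:ℝ)) = (q.den:ℝ) * ρ (q:ℝ) := by
      rw [hdenR]; exact natmul k (q:ℝ) hqR
    have hd1 : ((q.den : ℝ)) * (q:ℝ) = (q.num : ℝ) := by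
      rw [Rat.cast_def]
      field_simp
    obtain ⟨j, hj⟩ : ∃ j:ℕ, q.num.toNat = j+1 :=
      Nat.exists_eq_succ_of_ne_zero (by omega)
    have hnumR : (q.num : ℝ) = (j:ℝ) + 1 := by
      have h1 : ((q.num.toNat : ℤ)) = q.num := Int.toNat_of_nonneg hnum.le
      have : ((q.num.toNat : ℝ)) = (q.num : ℝ) := by exact_mod_cast congrArg (Int.cast : ℤ → ℝ) h1
      rw [← this, hj]; push_cast; ring
    have e2 : ρ ((q.num:ℝ)) = (q.num:ℝ) * c := by
      have h := natmul j 1 one_pos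
      rw [mul_one] at h
      rw [hnumR, h, hc]
    have final : (q.den:ℝ) * ρ (q:ℝ) = (q.num:ℝ) * c := by rw [← e1, hd1, e2]
    have hdne : (q.den:ℝ) ≠ 0 := by rw [hdenR]; positivity
    have hcast : (q:ℝ) = (q.num:ℝ)/(q.den:ℝ) := by
      exact_mod_cast (Rat.num_div_den q).symm
    have hres : ρ (q:ℝ) = ((q.num:ℝ) * c) / (q.den:ℝ) := by
      rw [← final]; field_simp
    rw [hres, hcast]; ring
  have lin : ∀ d : ℝ, 0 ≤ d → ρ d = c * d := by
    intro d hd0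
    rcases hd0.eq_or_lt with h | hd
    · rw [← h, hρ0]; ring
    refine le_antisymm ?_ ?_
    · by_contra hcon
      push_neg at hcon
      have hlt : d < ρ d / c := by rw [lt_div_iff₀ hcpos]; nlinarith
      obtain ⟨qr, hq1, hq2⟩ := exists_rat_btwn hlt
      have hqpos : (0:ℚ) < qr := by
        have h0 : (0:ℝ) < (qr:ℝ) := lt_trans hd hq1
        exact_mod_cast h0
      have h3 : ρ d < ρ (qr:ℝ) := smono (qr:ℝ) d hd hq1
      rw [ratmul qr hqpos] at h3
      have h4 : c * (qr:ℝ) < c * (ρ d / c) := (mul_lt_mul_iff_right₀ hcpos).2 hq2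
      have h5 : c * (ρ d / c) = ρ d := by field_simp
      linarith
    · by_contra hcon
      push_neg at hcon
      have hlt : ρ d / c < d := by rw [div_lt_iff₀ hcpos]; nlinarith
      obtain ⟨qr, hq1, hq2⟩ := exists_rat_btwn hlt
      have hqpos : (0:ℚ) < qr := by
        have h0 : (0:ℝ) < (qr:ℝ) := lt_trans (div_pos (ρpos d hd) hcpos) hq1
        exact_mod_cast h0
      have h3 : ρ (qr:ℝ) < ρ d := smono d (qr:ℝ) (by
        exact lt_trans (div_pos (ρpos d hd) hcpos) hq1) hq2
      rw [ratmul qr hqpos] at h3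
      have h4 : c * (ρ d / c) < c * (qr:ℝ) := (mul_lt_mul_iff_right₀ hcpos).2 hq1
      have h5 : c * (ρ d / c) = ρ d := by field_simp
      linarith
  have distscale : ∀ v w : E3, dist (Φ v) (Φ w) = c * dist v w := by
    intro v w
    rw [ρdist, lin _ dist_nonneg]
  have gsq : ∀ t s : ℝ, (g t - g s)^2 = c^2 * (t - s)^2 := by
    intro t s
    have h := (hm t s (0:E3) (|t - s| • sg)).mp (by
      rw [dist_zero_single _ (abs_nonneg _)])
    rw [distscale, dist_zero_single _ (abs_nonneg _)] at h
    have := congrArg (· ^ 2) h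
    rw [sq_abs, mul_pow, sq_abs] at this
    exact this
  refine ⟨c, hcpos, (g 1 - g 0)/c, ?_, distscale, ?_⟩
  · have hY2 : (g 1 - g 0)^2 = c^2 := by
      have := gsq 1 0; simpa using this
    rw [div_pow, hY2]
    field_simp
  · intro t
    have hY2 : (g 1 - g 0)^2 = c^2 := by
      have := gsq 1 0; simpa using this
    have h1 := gsq t 1
    have h2 := gsq t 0
    have hXY : (g t - g 0) * (g 1 - g 0) = c^2 * t := by
      nlinarith [h1, h2, hY2]
    have key : c^2 * ((g t - g 0) - t * (g 1 - g 0)) = 0 := by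
      linear_combination (g 1 - g 0) * hXY - (g t - g 0) * hY2
    have hc2 : (c:ℝ)^2 ≠ 0 := by positivity
    have hX : g t - g 0 = t * (g 1 - g 0) := by
      rcases mul_eq_zero.1 key with h | h
      · exact absurd h hc2
      · linarith
    have hδc : (g 1 - g 0)/c * c = g 1 - g 0 := by field_simp
    rw [show (g 1 - g 0)/c * c * t = ((g 1 - g 0)/c * c) * t by ring, hδc]
    linarith

/-! ### Forward direction: structure of automorphisms -/

section Forward

variable (f : Pt → Pt)

/-- The induced time function. -/
def gf : ℝ → ℝ := fun t => f (cns t 0) 0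

/-- The induced spatial function. -/
def Phif : E3 → E3 := fun v => tl (f (cns 0 v))

variable (hf : Function.Bijective f)
  (hL : ∀ p q : Pt, lightlike p q ↔ lightlike (f p) (f q))
  (hS : ∀ p q : Pt, simul p q ↔ simul (f p) (f q))

set_option linter.unusedSectionVars false

include hf hL hS

lemma ftime : ∀ p : Pt, f p 0 = gf f (p 0) := by
  intro p
  have h : simul p (cns (p 0) 0) := rfl
  exact (hS p (cns (p 0) 0)).mp h

lemma ginj : Function.Injective (gf f) := by
  intro t s h
  have := (hS (cns t 0) (cns s 0)).mpr h
  exact this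

lemma gsurj : Function.Surjective (gf f) := by
  intro y
  obtain ⟨p, hp⟩ := hf.2 (cns y 0)
  refine ⟨p 0, ?_⟩
  rw [← ftime f hf hL hS p, hp]
  rfl

lemma tail_const : ∀ (t t' : ℝ) (v : E3), tl (f (cns t v)) = tl (f (cns t' v)) := by
  intro t t' v
  rcases eq_or_ne t t' with h | hne
  · rw [h]
  set s : ℝ := (t + t') / 2 with hs
  have hts : t ≠ s := by
    intro h; apply hne; rw [hs] at h; linarith
  have ht's : t' ≠ s := by
    intro h; apply hne; rw [hs] at h; linarith
  have habs : |t - s| = |t' - s| := by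
    rw [hs, abs_sub_comm t, show (t+t')/2 - t = (t' - t)/2 by ring,
      show t' - (t+t')/2 = (t' - t)/2 by ring]
  have hρpos : 0 < |gf f t - gf f s| := by
    rw [abs_pos, sub_ne_zero]
    exact fun h => hts (ginj f hf hL hS h)
  apply center_eq_of_sphere_subset hρpos
  intro C hC
  obtain ⟨q, hq⟩ := hf.2 (cns (gf f s) C)
  have hq0 : q 0 = s := by
    apply ginj f hf hL hS
    rw [← ftime f hf hL hS q, hq]
    rfl
  have l1 : lightlike (cns t v) q := by
    apply (hL _ q).mpr
    rw [lightlike_iff, hq, ftime f hf hL hS (cns t v)]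
    simp only [cns_zero, tl_cns]
    rw [dist_comm] at hC
    exact hC.symm ▸ (by rw [← hC])
  have l1' := (lightlike_iff _ _).1 l1
  rw [cns_zero, tl_cns, hq0] at l1'
  have l2 : lightlike (cns t' v) q := by
    rw [lightlike_iff, cns_zero, tl_cns, hq0, ← habs]
    exact l1'
  have l2' := (lightlike_iff _ _).1 ((hL _ q).mp l2)
  rw [ftime f hf hL hS (cns t' v), ftime f hf hL hS q, cns_zero, hq0, hq, tl_cns] at l2'
  rw [dist_comm]
  exact l2'.symm

lemma f_eq : ∀ p : Pt, f p = cns (gf f (p 0)) (Phif f (tl p)) := by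
  intro p
  have h1 : f p = cns (f p 0) (tl (f p)) := (cns_tl (f p)).symm
  rw [h1, ftime f hf hL hS p]
  congr 1
  have h2 : tl (f p) = tl (f (cns (p 0) (tl p))) := by rw [cns_tl]
  rw [h2, tail_const f hf hL hS (p 0) 0 (tl p)]
  rfl

lemma master : ∀ (t s : ℝ) (v w : E3),
    |t - s| = dist v w ↔ |gf f t - gf f s| = dist (Phif f v) (Phif f w) := by
  intro t s v w
  have h := hL (cns t v) (cns s w)
  rw [lightlike_iff, lightlike_iff, f_eq f hf hL hS (cns t v), f_eq f hf hL hS (cns s w)] at h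
  simpa using h

lemma Phisurj : Function.Surjective (Phif f) := by
  intro C
  obtain ⟨q, hq⟩ := hf.2 (cns (gf f 0) C)
  refine ⟨tl q, ?_⟩
  have h1 := f_eq f hf hL hS q
  rw [hq] at h1
  have hq0 : q 0 = 0 := by
    apply ginj f hf hL hS
    rw [← ftime f hf hL hS q, hq]; rfl
  rw [hq0] at h1
  have := congrArg tl h1
  rw [tl_cns, tl_cns] at this
  exact this.symm

lemma Phiinj : Function.Injective (Phif f) := by
  intro v w h
  have h1 : f (cns 0 v) = f (cns 0 w) := by
    rw [f_eq f hf hL hS (cns 0 v), f_eq f hf hL hS (cns 0 w)]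
    simp [h]
  have := hf.1 h1
  have := congrArg tl this
  simpa using this

end Forward

/-! ### Assembly lemmas -/

lemma cns_add (a b : ℝ) (v w : E3) : cns a v + cns b w = cns (a+b) (v+w) := by
  funext i
  refine Fin.cases ?_ (fun j => ?_) i <;> rfl

lemma cns_smul (r a : ℝ) (v : E3) : r • cns a v = cns (r*a) (r • v) := by
  funext i
  refine Fin.cases ?_ (fun j => ?_) i <;> rfl

lemma tl_add (p q : Pt) : tl (p + q) = tl p + tl q := by ext i; rfl

lemma tl_smul (r : ℝ) (p : Pt) : tl (r • p) = r • tl p := by ext i; rfl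

lemma sqEucl_cns (t : ℝ) (v : E3) : sqEucl (cns t v) = t^2 + ‖v‖^2 := by
  rw [norm_E3]
  simp only [sqEucl, cns_zero, cns_one, cns_two, cns_three]
  ring

lemma vert_mem (p q : Pt) : (p 1 = q 1 ∧ p 2 = q 2 ∧ p 3 = q 3) ↔ tl p = tl q := by
  constructor
  · rintro ⟨h1, h2, h3⟩
    ext i
    fin_cases i
    · exact h1
    · exact h2
    · exact h3
  · intro h
    exact ⟨congrFun (congrArg WithLp.ofLp h) 0, congrFun (congrArg WithLp.ofLp h) 1,
        congrFun (congrArg WithLp.ofLp h) 2⟩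

theorem forward_dir (f : Pt → Pt) (hf : Function.Bijective f)
    (hL : ∀ p q : Pt, lightlike p q ↔ lightlike (f p) (f q))
    (hS : ∀ p q : Pt, simul p q ↔ simul (f p) (f q)) :
    ∃ D ∈ Scal, ∃ T ∈ Triv, f = D ∘ T := by
  obtain ⟨c, hcpos, δ, hδ2, hdist, hgt⟩ :=
    abstract_linearity (gf f) (Phif f) (ginj f hf hL hS) (Phisurj f hf hL hS)
      (master f hf hL hS)
  have hcne : c ≠ 0 := ne_of_gt hcpos
  have hδδ : δ * δ = 1 := by rw [← pow_two]; exact hδ2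
  set Ψ : E3 → E3 := fun v => c⁻¹ • (Phif f v - Phif f 0) with hΨ
  have hΨbij : Function.Bijective Ψ := by
    constructor
    · intro v w h
      apply Phiinj f hf hL hS
      have := congrArg (fun x => c • x) h
      simp only [hΨ, smul_smul, mul_inv_cancel₀ hcne, one_smul] at this
      have h2 : Phif f v - Phif f 0 = Phif f w - Phif f 0 := this
      have := congrArg (fun x => x + Phif f 0) h2
      simpa using this
    · intro y
      obtain ⟨v, hv⟩ := Phisurj f hf hL hS (c • y + Phif f 0)
      refine ⟨v, ?_⟩
      rw [hΨ]
      simp only [hv]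
      rw [add_sub_cancel_right, smul_smul, inv_mul_cancel₀ hcne, one_smul]
  have hΨiso : Isometry Ψ := by
    apply Isometry.of_dist_eq
    intro v w
    have hsub : Ψ v - Ψ w = c⁻¹ • (Phif f v - Phif f w) := by
      rw [hΨ]; simp only [smul_sub]; abel
    rw [dist_eq_norm, hsub, norm_smul, ← dist_eq_norm, hdist]
    rw [Real.norm_eq_abs, abs_of_pos (inv_pos.2 hcpos)]
    field_simp
  set ΨE : E3 ≃ᵢ E3 :=
    { toEquiv := Equiv.ofBijective Ψ hΨbij, isometry_toFun := hΨiso } with hΨE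
  have hΨ0 : ΨE 0 = 0 := by
    show Ψ 0 = 0
    rw [hΨ]; simp
  set LI := ΨE.toRealLinearIsometryEquivOfMapZero hΨ0 with hLI
  have LIcoe : ∀ v, LI v = Ψ v := fun v =>
    congrFun (IsometryEquiv.coe_toRealLinearIsometryEquivOfMapZero ΨE hΨ0) v
  have Ψadd : ∀ v w, Ψ (v + w) = Ψ v + Ψ w := by
    intro v w
    rw [← LIcoe, ← LIcoe, ← LIcoe, map_add]
  have Ψsmul : ∀ (r : ℝ) v, Ψ (r • v) = r • Ψ v := by
    intro r v
    rw [← LIcoe, ← LIcoe, map_smul]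
  have Ψnorm : ∀ v, ‖Ψ v‖ = ‖v‖ := by
    intro v
    rw [← LIcoe]; exact LI.norm_map v
  have Ψsymm : ∀ v, LI.symm (Ψ v) = v := by
    intro v
    rw [← LIcoe]; exact LI.symm_apply_apply v
  have Ψsymm' : ∀ v, Ψ (LI.symm v) = v := by
    intro v
    rw [← LIcoe]; exact LI.apply_symm_apply v
  -- the pieces
  set b0 : ℝ := c⁻¹ * gf f 0 with hb0
  set bv : E3 := c⁻¹ • Phif f 0 with hbv
  set bT : Pt := cns b0 bv with hbT
  set L0 : Pt → Pt := fun p => cns (δ * p 0) (Ψ (tl p)) with hL0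
  set T : Pt → Pt := fun p => L0 p + bT with hT
  have Tapp : ∀ p, T p = cns (δ * p 0 + b0) (Ψ (tl p) + bv) := by
    intro p
    rw [hT]
    simp only [hL0]
    rw [hbT, cns_add]
  refine ⟨fun p => c • p, ⟨c, hcne, fun p => rfl⟩, T, ⟨?_, ?_⟩, ?_⟩
  · -- IsEuclIsom T
    refine ⟨fun x => x + bT, L0, ⟨bT, fun p => rfl⟩, ?_, ?_, ?_, rfl⟩
    · constructor
      · intro p q
        simp only [hL0]
        rw [show (p + q) 0 = p 0 + q 0 from rfl, tl_add, Ψadd, cns_add]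
        congr 1
        ring
      · intro r p
        simp only [hL0]
        rw [show (r • p) 0 = r * p 0 from rfl, tl_smul, Ψsmul, cns_smul]
        congr 1
        ring
    · apply Function.bijective_iff_has_inverse.mpr
      refine ⟨fun q => cns (δ * q 0) (LI.symm (tl q)), ?_, ?_⟩
      · intro p
        simp only [hL0, cns_zero, tl_cns]
        rw [Ψsymm, show δ * (δ * p 0) = (δ * δ) * p 0 by ring, hδδ, one_mul, cns_tl]
      · intro q
        simp only [hL0, cns_zero, tl_cns]
        rw [Ψsymm', show δ * (δ * q 0) = (δ * δ) * q 0 by ring, hδδ, one_mul, cns_tl]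
    · intro p
      simp only [hL0]
      rw [sqEucl_cns, Ψnorm, show sqEucl p = sqEucl (cns (p 0) (tl p)) by rw [cns_tl],
        sqEucl_cns]
      have : (δ * p 0)^2 = δ^2 * (p 0)^2 := by ring
      rw [this, hδ2, one_mul]
  · -- vertical lines
    rintro ℓ ⟨q, hq⟩
    refine ⟨T q, ?_⟩
    ext p'
    constructor
    · rintro ⟨p, hp, rfl⟩
      rw [hq] at hp
      have htl : tl p = tl q := (vert_mem p q).1 hp
      apply (vert_mem (T p) (T q)).2
      rw [Tapp, Tapp, htl, tl_cns, tl_cns]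
    · intro hp'
      have htl : tl p' = tl (T q) := (vert_mem p' (T q)).1 hp'
      refine ⟨cns (δ * (p' 0 - b0)) (tl q), ?_, ?_⟩
      · rw [hq]
        apply (vert_mem _ q).2
        rw [tl_cns]
      · rw [Tapp, tl_cns, cns_zero]
        have h1 : δ * (δ * (p' 0 - b0)) + b0 = p' 0 := by
          rw [show δ * (δ * (p' 0 - b0)) = (δ * δ) * (p' 0 - b0) by ring, hδδ]; ring
        rw [h1, show Ψ (tl q) + bv = tl (T q) by rw [Tapp, tl_cns], ← htl, cns_tl]
  · -- f = D ∘ T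
    funext p
    show f p = c • T p
    rw [f_eq f hf hL hS p, Tapp, cns_smul]
    have hc1 : gf f (p 0) = c * (δ * p 0 + b0) := by
      rw [hgt, hb0]
      field_simp
      ring
    have hc2 : Phif f (tl p) = c • (Ψ (tl p) + bv) := by
      rw [smul_add, hΨ, hbv, smul_smul, smul_smul, mul_inv_cancel₀ hcne, one_smul, one_smul]
      abel
    rw [hc1, hc2]

/-! ### Backward direction -/

theorem backward_dir (f : Pt → Pt) (D T : Pt → Pt) (hD : IsScaling D) (hT : IsTrivial T)
    (hfDT : f = D ∘ T) :
    (∀ p q : Pt, lightlike p q ↔ lightlike (f p) (f q)) ∧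
      (∀ p q : Pt, simul p q ↔ simul (f p) (f q)) := by
  obtain ⟨a, ha0, hDa⟩ := hD
  obtain ⟨⟨τ, L, ⟨b, hτb⟩, hLlin, hLbij, hLQ, hTeq⟩, hTvert⟩ := hT
  have hfp : ∀ p, f p = a • (L p + b) := by
    intro p
    rw [hfDT]
    show D (T p) = _
    rw [hTeq]
    show D (τ (L p)) = _
    rw [hτb, hDa]
  set e0 : Pt := cns 1 0 with he0
  -- the time axis is a vertical line
  have hax : IsVerticalLine {p : Pt | p 1 = (0:Pt) 1 ∧ p 2 = (0:Pt) 2 ∧ p 3 = (0:Pt) 3} :=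
    ⟨0, rfl⟩
  obtain ⟨q', hq'⟩ := hTvert _ hax
  have h0mem : (0:Pt) ∈ {p : Pt | p 1 = (0:Pt) 1 ∧ p 2 = (0:Pt) 2 ∧ p 3 = (0:Pt) 3} :=
    ⟨rfl, rfl, rfl⟩
  have he0mem : e0 ∈ {p : Pt | p 1 = (0:Pt) 1 ∧ p 2 = (0:Pt) 2 ∧ p 3 = (0:Pt) 3} := by
    refine ⟨?_, ?_, ?_⟩ <;> rfl
  have hT0 : T 0 ∈ T '' _ := Set.mem_image_of_mem T h0mem
  have hTe0 : T e0 ∈ T '' _ := Set.mem_image_of_mem T he0mem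
  rw [hq'] at hT0 hTe0
  have hTsp : T e0 1 = T 0 1 ∧ T e0 2 = T 0 2 ∧ T e0 3 = T 0 3 := by
    obtain ⟨a1, a2, a3⟩ := hT0
    obtain ⟨b1, b2, b3⟩ := hTe0
    exact ⟨b1.trans a1.symm, b2.trans a2.symm, b3.trans a3.symm⟩
  have hTp : ∀ p, T p = L p + b := by
    intro p
    rw [hTeq]
    show τ (L p) = _
    rw [hτb]
  have hL0 : L 0 = 0 := by
    have := hLlin.map_smul 0 0
    simpa using this
  have hLe0sp : L e0 1 = 0 ∧ L e0 2 = 0 ∧ L e0 3 = 0 := by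
    obtain ⟨c1, c2, c3⟩ := hTsp
    rw [hTp, hTp, hL0] at c1 c2 c3
    simp only [Pi.add_apply, Pi.zero_apply, zero_add] at c1 c2 c3
    constructor
    · linarith [c1]
    constructor
    · linarith [c2]
    · linarith [c3]
  set ce : ℝ := L e0 0 with hce
  have hQe0 : sqEucl e0 = 1 := by
    simp [sqEucl, he0]
  have hce2 : ce^2 = 1 := by
    have h := hLQ e0
    rw [hQe0] at h
    rw [hce]
    obtain ⟨c1, c2, c3⟩ := hLe0sp
    simp only [sqEucl, c1, c2, c3] at h
    rw [← h]
    ring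
  have hcene : ce ≠ 0 := by
    intro h
    rw [h] at hce2
    norm_num at hce2
  have hLtime : ∀ p : Pt, L p 0 = ce * p 0 := by
    intro p
    have hadd : L (p + e0) = L p + L e0 := hLlin.map_add p e0
    have H1 : sqEucl (L p + L e0) = sqEucl (p + e0) := by
      rw [← hadd]; exact hLQ (p + e0)
    have H2 : sqEucl (L p) = sqEucl p := hLQ p
    obtain ⟨c1, c2, c3⟩ := hLe0sp
    have he00 : e0 0 = 1 := rfl
    have he01 : e0 1 = 0 := rfl
    have he02 : e0 2 = 0 := rfl
    have he03 : e0 3 = 0 := rfl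
    simp only [sqEucl, Pi.add_apply, c1, c2, c3, he00, he01, he02, he03, ← hce] at H1 H2
    have cross : L p 0 * ce = p 0 := by linear_combination (1/2)*H1 - (1/2)*H2 - (1/2)*hce2
    have hfact : (ce - 1) * (ce + 1) = 0 := by linear_combination hce2
    rcases mul_eq_zero.1 hfact with h | h
    · have : ce = 1 := by linarith
      rw [this] at cross ⊢
      linarith
    · have : ce = -1 := by linarith
      rw [this] at cross ⊢
      linarith
  have hLsp : ∀ p : Pt, (L p 1)^2 + (L p 2)^2 + (L p 3)^2 = (p 1)^2 + (p 2)^2 + (p 3)^2 := by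
    intro p
    have H2 : sqEucl (L p) = sqEucl p := hLQ p
    simp only [sqEucl] at H2
    have ht : (L p 0)^2 = (p 0)^2 := by
      rw [hLtime p]
      linear_combination (p 0)^2 * hce2
    linarith
  have hdiff : ∀ (p q : Pt) (i : Fin 4), f p i - f q i = a * (L (p - q)) i := by
    intro p q i
    rw [hfp, hfp, hLlin.map_sub]
    show a * (L p i + b i) - a * (L q i + b i) = a * (L p i - L q i)
    ring
  constructor
  · intro p q
    unfold lightlike
    rw [show f p 0 - f q 0 = a * (L (p-q)) 0 from hdiff p q 0,
      show f p 1 - f q 1 = a * (L (p-q)) 1 from hdiff p q 1,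
      show f p 2 - f q 2 = a * (L (p-q)) 2 from hdiff p q 2,
      show f p 3 - f q 3 = a * (L (p-q)) 3 from hdiff p q 3]
    rw [hLtime (p - q)]
    have hsp := hLsp (p - q)
    have hd0 : (p - q) 0 = p 0 - q 0 := rfl
    have hd1 : (p - q) 1 = p 1 - q 1 := rfl
    have hd2 : (p - q) 2 = p 2 - q 2 := rfl
    have hd3 : (p - q) 3 = p 3 - q 3 := rfl
    rw [hd1, hd2, hd3] at hsp
    have ha2 : a^2 ≠ 0 := pow_ne_zero 2 ha0
    have lhs_eq : (a * (ce * ((p - q) 0)))^2 = a^2 * (p 0 - q 0)^2 := by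
      rw [hd0]
      linear_combination (a^2 * (p 0 - q 0)^2) * hce2
    have rhs_eq : (a * (L (p-q) 1))^2 + (a * (L (p-q) 2))^2 + (a * (L (p-q) 3))^2 =
        a^2 * ((p 1 - q 1)^2 + (p 2 - q 2)^2 + (p 3 - q 3)^2) := by
      linear_combination a^2 * hsp
    rw [lhs_eq, rhs_eq]
    exact (mul_right_inj' ha2).symm
  · intro p q
    have hfp0 : ∀ r : Pt, f r 0 = a * (ce * r 0 + b 0) := by
      intro r
      rw [hfp]
      show a * (L r 0 + b 0) = _
      rw [hLtime]
    unfold simul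
    rw [hfp0, hfp0]
    constructor
    · intro h; rw [h]
    · intro h
      have h1 : ce * p 0 = ce * q 0 := by
        have := mul_left_cancel₀ ha0 h
        linarith
      exact mul_left_cancel₀ hcene h1

/-- The automorphism group of late classical spacetime is Scal ∘ Triv: a bijection
of ℝ⁴ respects both lightlike relatedness and absolute simultaneity if and only if
it is a composition of a scaling and a trivial transformation. -/
theorem aut_lclassst_eq_scal_comp_triv (f : Pt → Pt) (hf : Function.Bijective f) :
    ((∀ p q : Pt, lightlike p q ↔ lightlike (f p) (f q)) ∧
      (∀ p q : Pt, simul p q ↔ simul (f p) (f q))) ↔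
      ∃ D ∈ Scal, ∃ T ∈ Triv, f = D ∘ T := by
  constructor
  · rintro ⟨hL, hS⟩
    exact forward_dir f hf hL hS
  · rintro ⟨D, hD, T, hT, hfDT⟩
    exact backward_dir f D T hD hT hfDT

end
end

section
/- Every bijection f : ℝ⁴ → ℝ⁴ that respects the collinearity relation Col (i.e., Col(p,q,r) ⟺ Col(f(p),f(q),f(r)) for all p,q,r) is the composition of a bijective linear transformation and a translation. Consequently, every automorphism of a coordinate geometry (a relational structure on ℝ⁴ in which Col is first-order definable) is affine. -/
open FirstOrder Language Function Set

/-- The ternary collinearity relation on ℝ⁴. -/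
def Col (p q r : Pt) : Prop := (∃ a : ℝ, q = p + a • (r - p)) ∨ r = p

/-- Collinearity as a ternary concept (a set of 3-tuples of points). -/
def ColSet : Set (Fin 3 → Pt) := {v | Col (v 0) (v 1) (v 2)}

namespace ColAux

/-- concrete linear independence of a pair -/
def Indep (u v : Pt) : Prop := ∀ a b : ℝ, a • u + b • v = 0 → a = 0 ∧ b = 0

lemma col_zero_iff {u v : Pt} : Col 0 u v ↔ (∃ a : ℝ, u = a • v) ∨ v = 0 := by
  simp [Col]

lemma indep_symm {u v : Pt} (h : Indep u v) : Indep v u := by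
  intro a b hab
  have := h b a (by rw [add_comm]; exact hab)
  exact ⟨this.2, this.1⟩

lemma indep_left_ne {u v : Pt} (h : Indep u v) : u ≠ 0 := by
  intro h0
  have := (h 1 0 (by simp [h0])).1
  norm_num at this

lemma indep_right_ne {u v : Pt} (h : Indep u v) : v ≠ 0 :=
  indep_left_ne (indep_symm h)

lemma indep_of_not_col {u v : Pt} (h : ¬ Col 0 u v) : Indep u v := by
  rw [col_zero_iff] at h
  push_neg at h
  obtain ⟨h1, h2⟩ := h
  intro a b hab
  rcases eq_or_ne a 0 with ha | ha
  · subst ha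
    simp only [zero_smul, zero_add] at hab
    rcases smul_eq_zero.1 hab with hb | hv
    · exact ⟨rfl, hb⟩
    · exact absurd hv h2
  · exfalso
    apply h1 (-b / a)
    have : a • u = (-b) • v := by
      have := hab
      rw [add_eq_zero_iff_eq_neg] at this
      rw [this, neg_smul]
    calc u = a⁻¹ • (a • u) := by rw [smul_smul, inv_mul_cancel₀ ha, one_smul]
    _ = a⁻¹ • ((-b) • v) := by rw [this]
    _ = (-b / a) • v := by rw [smul_smul, div_eq_mul_inv, mul_comm]

lemma not_col_of_indep {u v : Pt} (h : Indep u v) : ¬ Col 0 u v := by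
  rw [col_zero_iff]
  rintro (⟨a, ha⟩ | hv)
  · have := (h 1 (-a) (by rw [ha]; simp)).1
    norm_num at this
  · exact indep_right_ne h hv

lemma indep_unique_coeff {u v : Pt} (h : Indep u v) {a b c d : ℝ}
    (hc : a • u + b • v = c • u + d • v) : a = c ∧ b = d := by
  have key : (a - c) • u + (b - d) • v = 0 := by
    calc (a - c) • u + (b - d) • v = (a • u + b • v) - (c • u + d • v) := by module
    _ = 0 := by rw [hc, sub_self]
  have := h _ _ key
  constructor <;> linarith [this.1, this.2]

lemma smul_cancel {v : Pt} (hv : v ≠ 0) {s t : ℝ} (h : s • v = t • v) : s = t := by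
  have : (s - t) • v = 0 := by rw [sub_smul, h, sub_self]
  rcases smul_eq_zero.1 this with h' | h'
  · linarith
  · exact absurd h' hv

lemma exists_indep {x : Pt} (hx : x ≠ 0) : ∃ z : Pt, Indep x z := by
  have : ∃ j, x j ≠ 0 := by
    by_contra h
    push_neg at h
    exact hx (funext h)
  obtain ⟨j, hj⟩ := this
  obtain ⟨k, hk⟩ : ∃ k : Fin 4, k ≠ j := by
    rcases eq_or_ne j 0 with h0 | h0
    · exact ⟨1, by simp [h0]⟩
    · exact ⟨0, Ne.symm h0⟩
  refine ⟨fun i => if i = k then 1 else 0, ?_⟩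
  intro a b hab
  have hj' : a * x j + b * 0 = 0 := by
    have := congrFun hab j
    simpa [Pi.add_apply, (hk.symm : j ≠ k)] using this
  have ha : a = 0 := by
    rcases mul_eq_zero.1 (by linarith : a * x j = 0) with h | h
    · exact h
    · exact absurd h hj
  subst ha
  have := congrFun hab k
  simp at this
  exact ⟨rfl, this⟩

section F

variable {f : Pt → Pt} (hbij : Function.Bijective f)
  (hcol : ∀ p q r : Pt, Col p q r ↔ Col (f p) (f q) (f r)) (h0 : f 0 = 0)

include hbij hcol h0

lemma f_ne_zero {x : Pt} (hx : x ≠ 0) : f x ≠ 0 := by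
  intro h
  exact hx (hbij.1 (by rw [h, h0]))

lemma indep_image {x y : Pt} (h : Indep x y) : Indep (f x) (f y) := by
  apply indep_of_not_col
  rw [← h0]
  rw [← hcol]
  exact not_col_of_indep h

/-- the coefficient lemma: image of a multiple is a multiple -/
lemma span_image {x : Pt} (hx : x ≠ 0) (a : ℝ) : ∃ s : ℝ, f (a • x) = s • f x := by
  have h1 : Col 0 (a • x) x := col_zero_iff.2 (Or.inl ⟨a, rfl⟩)
  have h2 := (hcol 0 (a • x) x).1 h1
  rw [h0] at h2
  rcases col_zero_iff.1 h2 with ⟨s, hs⟩ | h'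
  · exact ⟨s, hs⟩
  · exact absurd h' (f_ne_zero hbij hcol h0 hx)

lemma coef_one {x y : Pt} (h : Indep x y) : ∃ β : ℝ, f (x + y) = f x + β • f y := by
  have hx : x ≠ 0 := indep_left_ne h
  have hy : y ≠ 0 := indep_right_ne h
  have hfind : Indep (f x) (f y) := indep_image hbij hcol h0 h
  have hfx : f x ≠ 0 := indep_left_ne hfind
  have hfy : f y ≠ 0 := indep_right_ne hfind
  -- step A : f (x+y) = α • f x + β • f y
  obtain ⟨a, ha⟩ := span_image hbij hcol h0 hx 2
  obtain ⟨b, hb⟩ := span_image hbij hcol h0 hy 2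
  have hcmid : Col ((2:ℝ) • x) (x + y) ((2:ℝ) • y) := by
    left
    exact ⟨1/2, by rw [smul_sub]; module⟩
  have h2 := (hcol _ _ _).1 hcmid
  have hne2 : f ((2:ℝ) • x) ≠ f ((2:ℝ) • y) := by
    intro hEq
    have : (2:ℝ) • x = (2:ℝ) • y := hbij.1 hEq
    have h' : (2:ℝ) • x + (-2 : ℝ) • y = 0 := by rw [this]; module
    have := (h 2 (-2) h').1
    norm_num at this
  obtain ⟨α, β, hrep⟩ : ∃ α β : ℝ, f (x + y) = α • f x + β • f y := by
    rcases h2 with ⟨c, hc⟩ | h'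
    · refine ⟨a - c * a, c * b, ?_⟩
      rw [ha, hb] at hc
      rw [hc]
      module
    · exact absurd h'.symm hne2
  -- step B : α = 1
  have halpha : α = 1 := by
    by_contra hα
    set t : ℝ := (1 - α)⁻¹ with ht
    have h1α : (1 : ℝ) - α ≠ 0 := by intro h'; apply hα; linarith
    have hz : f x + t • (f (x + y) - f x) = (t * β) • f y := by
      rw [hrep]
      have h1 : (1 : ℝ) + t * (α - 1) = 0 := by
        rw [ht]
        field_simp
        ring
      have : f x + t • (α • f x + β • f y - f x)
          = (1 + t * (α - 1)) • f x + (t * β) • f y := by module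
      rw [this, h1, zero_smul, zero_add]
    obtain ⟨w, hw⟩ := hbij.2 (f x + t • (f (x + y) - f x))
    -- w on line x, x+y
    have hc1 : Col (f x) (f w) (f (x + y)) := by
      left
      exact ⟨t, by rw [hw]⟩
    have hc1' := (hcol x w (x + y)).2 hc1
    have hw1 : ∃ c : ℝ, w = x + c • y := by
      rcases hc1' with ⟨c, hc⟩ | h'
      · exact ⟨c, by rw [hc]; congr 1; module⟩
      · exfalso
        apply indep_right_ne h
        have : y = (x + y) - x := by abel
        rw [this, h', sub_self]
    -- w on line 0 y
    have hc2 : Col 0 (f w) (f y) := by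
      rw [col_zero_iff]
      left
      exact ⟨t * β, by rw [hw, hz]⟩
    have hc2' := (hcol 0 w y).2 (by rw [h0]; exact hc2)
    have hw2 : ∃ d : ℝ, w = d • y := by
      rcases col_zero_iff.1 hc2' with ⟨d, hd⟩ | h'
      · exact ⟨d, hd⟩
      · exact absurd h' hy
    obtain ⟨c, hc⟩ := hw1
    obtain ⟨d, hd⟩ := hw2
    have hxcd : x + c • y = d • y := hc.symm.trans hd
    have key : (1 : ℝ) • x + (c - d) • y = 0 := by
      calc (1 : ℝ) • x + (c - d) • y = (x + c • y) - d • y := by module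
      _ = 0 := by rw [hxcd, sub_self]
    have := (h 1 (c - d) key).1
    norm_num at this
  exact ⟨β, by rw [hrep, halpha, one_smul]⟩

end F

end ColAux

namespace ColAux

section F2

variable {f : Pt → Pt} (hbij : Function.Bijective f)
  (hcol : ∀ p q r : Pt, Col p q r ↔ Col (f p) (f q) (f r)) (h0 : f 0 = 0)

include hbij hcol h0

lemma add_indep {x y : Pt} (h : Indep x y) : f (x + y) = f x + f y := by
  obtain ⟨β, hβ⟩ := coef_one hbij hcol h0 h
  obtain ⟨γ, hγ⟩ := coef_one hbij hcol h0 (indep_symm h)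
  have hfind := indep_image hbij hcol h0 h
  rw [add_comm y x] at hγ
  have heq : (1 : ℝ) • f x + β • f y = γ • f x + (1 : ℝ) • f y := by
    calc (1 : ℝ) • f x + β • f y = f x + β • f y := by module
    _ = f y + γ • f x := hβ.symm.trans hγ
    _ = γ • f x + (1 : ℝ) • f y := by module
  have := indep_unique_coeff hfind heq
  rw [hβ, this.2, one_smul]

lemma f_neg {x : Pt} (hx : x ≠ 0) : f (-x) = - f x := by
  obtain ⟨z, hz⟩ := exists_indep hx
  have hzx : Indep z (-x) := by
    intro a b hab
    have : (-b) • x + a • z = 0 := by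
      calc (-b) • x + a • z = a • z + b • (-x) := by module
      _ = 0 := hab
    have := hz _ _ this
    exact ⟨this.2, neg_eq_zero.1 this.1⟩
  have h1 : f (z + -x) = f z + f (-x) := add_indep hbij hcol h0 hzx
  have hzx2 : Indep (z + -x) x := by
    intro a b hab
    have : (b - a) • x + a • z = 0 := by
      calc (b - a) • x + a • z = a • (z + -x) + b • x := by module
      _ = 0 := hab
    have := hz _ _ this
    obtain ⟨h1', h2'⟩ := this
    constructor
    · exact h2'
    · linarith
  have h2 : f ((z + -x) + x) = f (z + -x) + f x := add_indep hbij hcol h0 hzx2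
  have h3 : (z + -x) + x = z := by abel
  rw [h3, h1] at h2
  have hsum : f (-x) + f x = 0 := by
    have h4 : f z + (f (-x) + f x) = f z + 0 := by
      rw [add_zero, ← add_assoc, ← h2]
    exact add_left_cancel h4
  exact eq_neg_of_add_eq_zero_left hsum

lemma add_gen (x y : Pt) : f (x + y) = f x + f y := by
  rcases eq_or_ne x 0 with hx | hx
  · rw [hx, zero_add, h0, zero_add]
  rcases eq_or_ne y 0 with hy | hy
  · rw [hy, add_zero, h0, add_zero]
  by_cases hind : Indep x y
  · exact add_indep hbij hcol h0 hind
  -- dependent case : y = c • x with c ≠ 0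
  obtain ⟨c, hc0, hcy⟩ : ∃ c : ℝ, c ≠ 0 ∧ y = c • x := by
    unfold Indep at hind
    push_neg at hind
    obtain ⟨a, b, hab, hnz⟩ := hind
    have hb : b ≠ 0 := by
      intro hb0
      subst hb0
      simp only [zero_smul, add_zero] at hab
      rcases smul_eq_zero.1 hab with h' | h'
      · exact hnz h' rfl
      · exact hx h'
    have ha : a ≠ 0 := by
      intro ha0
      subst ha0
      simp only [zero_smul, zero_add] at hab
      rcases smul_eq_zero.1 hab with h' | h'
      · exact hb h'
      · exact hy h'
    refine ⟨-a / b, by simp [ha, hb], ?_⟩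
    have : b • y = (-a) • x := by
      calc b • y = (a • x + b • y) - a • x := by module
      _ = (-a) • x := by rw [hab]; module
    calc y = b⁻¹ • (b • y) := by rw [smul_smul, inv_mul_cancel₀ hb, one_smul]
    _ = b⁻¹ • ((-a) • x) := by rw [this]
    _ = (-a / b) • x := by rw [smul_smul, div_eq_mul_inv, mul_comm]
  obtain ⟨z, hz⟩ := exists_indep hx
  have hz0 : z ≠ 0 := indep_right_ne hz
  rcases eq_or_ne c (-1) with hc1 | hc1
  · -- y = -x
    have hyx : y = -x := by rw [hcy, hc1]; module
    rw [hyx, add_neg_cancel, h0, f_neg hbij hcol h0 hx, add_neg_cancel]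
  · -- c ≠ -1, c ≠ 0
    have i1 : Indep x z := hz
    have i2 : Indep (c • x) (-z) := by
      intro a b hab
      have : (a * c) • x + (-b) • z = 0 := by
        calc (a * c) • x + (-b) • z = a • (c • x) + b • (-z) := by module
        _ = 0 := hab
      have := hz _ _ this
      constructor
      · have hac := this.1
        rcases mul_eq_zero.1 hac with h' | h'
        · exact h'
        · exact absurd h' hc0
      · exact neg_eq_zero.1 this.2
    have i3 : Indep (x + z) (c • x + -z) := by
      intro a b hab
      have : (a + b * c) • x + (a - b) • z = 0 := by
        calc (a + b * c) • x + (a - b) • z = a • (x + z) + b • (c • x + -z) := by module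
        _ = 0 := hab
      have := hz _ _ this
      obtain ⟨e1, e2⟩ := this
      have hab' : a = b := by linarith
      have : a * (1 + c) = 0 := by rw [hab'] at e1 ⊢; linarith
      rcases mul_eq_zero.1 this with h' | h'
      · exact ⟨h', by linarith⟩
      · exfalso; apply hc1; linarith
    have e1 : f (x + z) = f x + f z := add_indep hbij hcol h0 i1
    have e2 : f (c • x + -z) = f (c • x) + f (-z) := add_indep hbij hcol h0 i2
    have e3 : f ((x + z) + (c • x + -z)) = f (x + z) + f (c • x + -z) :=
      add_indep hbij hcol h0 i3
    have hsplit : x + y = (x + z) + (c • x + -z) := by rw [hcy]; module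
    rw [hsplit, e3, e1, e2, f_neg hbij hcol h0 hz0, ← hcy]
    abel

lemma coeff_agree {x y : Pt} (hx : x ≠ 0) (hy : y ≠ 0) {a s t : ℝ}
    (hs : f (a • x) = s • f x) (ht : f (a • y) = t • f y) : s = t := by
  have key : ∀ u v : Pt, Indep u v → ∀ s' t' : ℝ,
      f (a • u) = s' • f u → f (a • v) = t' • f v → s' = t' := by
    intro u v huv s' t' hs' ht'
    have hu : u ≠ 0 := indep_left_ne huv
    have hv : v ≠ 0 := indep_right_ne huv
    have huv0 : u + v ≠ 0 := by
      intro h'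
      have : (1:ℝ) • u + (1:ℝ) • v = 0 := by rw [one_smul, one_smul]; exact h'
      exact one_ne_zero (huv _ _ this).1
    obtain ⟨r, hr⟩ := span_image hbij hcol h0 huv0 a
    have hfind := indep_image hbij hcol h0 huv
    have hadd : f (u + v) = f u + f v := add_gen hbij hcol h0 u v
    have hav : f (a • u + a • v) = s' • f u + t' • f v := by
      rw [add_gen hbij hcol h0, hs', ht']
    have hsm : a • (u + v) = a • u + a • v := by module
    rw [hsm, hav] at hr
    rw [hadd] at hr
    have : s' • f u + t' • f v = r • f u + r • f v := by
      rw [hr]; module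
    have := indep_unique_coeff hfind this
    rw [this.1, this.2]
  by_cases hind : Indep x y
  · exact key x y hind s t hs ht
  · -- dependent, both nonzero
    obtain ⟨z, hz⟩ := exists_indep hx
    have hyz : Indep y z := by
      -- y = c • x
      obtain ⟨c, hc0, hcy⟩ : ∃ c : ℝ, c ≠ 0 ∧ y = c • x := by
        unfold Indep at hind
        push_neg at hind
        obtain ⟨a', b', hab, hnz⟩ := hind
        have hb : b' ≠ 0 := by
          intro hb0
          subst hb0
          simp only [zero_smul, add_zero] at hab
          rcases smul_eq_zero.1 hab with h' | h'
          · exact hnz h' rfl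
          · exact hx h'
        refine ⟨-a' / b', ?_, ?_⟩
        · have ha : a' ≠ 0 := by
            intro ha0
            subst ha0
            simp only [zero_smul, zero_add] at hab
            rcases smul_eq_zero.1 hab with h' | h'
            · exact hb h'
            · exact hy h'
          simp [ha, hb]
        · have : b' • y = (-a') • x := by
            calc b' • y = (a' • x + b' • y) - a' • x := by module
            _ = (-a') • x := by rw [hab]; module
          calc y = b'⁻¹ • (b' • y) := by rw [smul_smul, inv_mul_cancel₀ hb, one_smul]
          _ = b'⁻¹ • ((-a') • x) := by rw [this]
          _ = (-a' / b') • x := by rw [smul_smul, div_eq_mul_inv, mul_comm]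
      intro a' b' hab
      have : (a' * c) • x + b' • z = 0 := by
        calc (a' * c) • x + b' • z = a' • y + b' • z := by rw [hcy]; module
        _ = 0 := hab
      have := hz _ _ this
      refine ⟨?_, this.2⟩
      rcases mul_eq_zero.1 this.1 with h' | h'
      · exact h'
      · exact absurd h' hc0
    obtain ⟨r, hr⟩ := span_image hbij hcol h0 (indep_right_ne hz) a
    have h1 := key x z hz s r hs hr
    have h2 := key y z hyz t r ht hr
    rw [h1, h2]

lemma smul_gen (a : ℝ) (x : Pt) : f (a • x) = a • f x := by
  rcases eq_or_ne x 0 with hx | hx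
  · rw [hx, smul_zero, h0, smul_zero]
  -- define sigma via the canonical vector
  set u : Pt := fun _ => (1:ℝ) with hu
  have hu0 : u ≠ 0 := by
    intro h'
    have := congrFun h' 0
    norm_num [hu] at this
  have hfu : f u ≠ 0 := f_ne_zero hbij hcol h0 hu0
  have sig : ∀ b : ℝ, ∃ s : ℝ, f (b • u) = s • f u := fun b =>
    span_image hbij hcol h0 hu0 b
  choose σ hσ using sig
  have hσ0 : σ 0 = 0 := by
    have : f ((0:ℝ) • u) = (0:ℝ) • f u := by rw [zero_smul, h0, zero_smul]
    exact smul_cancel hfu ((hσ 0).symm.trans this)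
  have hσ1 : σ 1 = 1 := by
    have : f ((1:ℝ) • u) = (1:ℝ) • f u := by rw [one_smul, one_smul]
    exact smul_cancel hfu ((hσ 1).symm.trans this)
  have hσadd : ∀ b c : ℝ, σ (b + c) = σ b + σ c := by
    intro b c
    have h1 : f ((b + c) • u) = (σ b + σ c) • f u := by
      have : (b + c) • u = b • u + c • u := by module
      rw [this, add_gen hbij hcol h0, hσ b, hσ c]
      module
    exact smul_cancel hfu ((hσ (b+c)).symm.trans h1)
  have hσmul : ∀ b c : ℝ, σ (b * c) = σ b * σ c := by
    intro b c
    rcases eq_or_ne c 0 with hc | hc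
    · rw [hc, mul_zero, hσ0, mul_zero]
    have hcu : c • u ≠ 0 := by
      intro h'
      rcases smul_eq_zero.1 h' with h'' | h''
      · exact hc h''
      · exact hu0 h''
    obtain ⟨s, hsp⟩ := span_image hbij hcol h0 hcu b
    have hbc : f ((b * c) • u) = (s * σ c) • f u := by
      have : (b * c) • u = b • (c • u) := by rw [smul_smul]
      rw [this, hsp, hσ c, smul_smul]
    have hsb : s = σ b := coeff_agree hbij hcol h0 hcu hu0 hsp (hσ b)
    have := smul_cancel hfu ((hσ (b*c)).symm.trans hbc)
    rw [this, hsb]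
  -- sigma is a ring hom, hence the identity
  let F : ℝ →+* ℝ := { toFun := σ, map_one' := hσ1, map_mul' := hσmul,
                       map_zero' := hσ0, map_add' := hσadd }
  have hF : F = RingHom.id ℝ := Subsingleton.elim _ _
  have hσid : ∀ b : ℝ, σ b = b := fun b => congrArg (fun g => g b) hF
  obtain ⟨s, hs⟩ := span_image hbij hcol h0 hx a
  have : s = σ a := coeff_agree hbij hcol h0 hx hu0 hs (hσ a)
  rw [hs, this, hσid]

lemma linear_of_col : IsLinearMap ℝ f :=
  ⟨add_gen hbij hcol h0, fun a x => smul_gen hbij hcol h0 a x⟩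

end F2

lemma col_translate (b p q r : Pt) : Col (p + b) (q + b) (r + b) ↔ Col p q r := by
  unfold Col
  constructor
  · rintro (⟨a, ha⟩ | h')
    · left
      exact ⟨a, by have := ha; calc q = (q + b) - b := by abel
        _ = (p + b) + a • (r + b - (p + b)) - b := by rw [ha]
        _ = p + a • (r - p) := by module⟩
    · right
      have : r = (r + b) - b := by abel
      rw [this, h']; abel
  · rintro (⟨a, ha⟩ | h')
    · left
      exact ⟨a, by rw [ha]; module⟩
    · right
      rw [h']

end ColAux

namespace ColAux

lemma part1 (f : Pt → Pt) (hbij : Function.Bijective f)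
    (hcol : ∀ p q r : Pt, Col p q r ↔ Col (f p) (f q) (f r)) :
    ∃ τ L, IsTranslation τ ∧ IsLinearMap ℝ L ∧ Function.Bijective L ∧ f = τ ∘ L := by
  set b := f 0 with hb
  set g : Pt → Pt := fun x => f x - b with hg
  have hg0 : g 0 = 0 := by simp [hg, hb]
  have hgbij : Function.Bijective g := by
    constructor
    · intro x y hxy
      apply hbij.1
      have : f x - b = f y - b := hxy
      rwa [sub_left_inj] at this
    · intro y
      obtain ⟨x, hx⟩ := hbij.2 (y + b)
      exact ⟨x, by simp [hg, hx]⟩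
  have hgcol : ∀ p q r : Pt, Col p q r ↔ Col (g p) (g q) (g r) := by
    intro p q r
    rw [hcol p q r]
    have h1 := col_translate (-b) (f p) (f q) (f r)
    have e : ∀ w : Pt, g w = f w + (-b) := fun w => by simp [hg, sub_eq_add_neg]
    rw [e p, e q, e r]
    exact h1.symm
  have hlin : IsLinearMap ℝ g := linear_of_col hgbij hgcol hg0
  refine ⟨fun p => p + b, g, ⟨b, fun _ => rfl⟩, hlin, hgbij, ?_⟩
  funext x
  simp [hg]

end ColAux

/-- Every bijection of ℝ⁴ respecting collinearity is a bijective linear transformation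
composed with a translation; consequently, every automorphism of a coordinate geometry
(a relational structure on ℝ⁴ in which `Col` is definable) is of this affine form. -/
theorem collineations_are_affine :
    (∀ f : Pt → Pt, Function.Bijective f →
      (∀ p q r : Pt, Col p q r ↔ Col (f p) (f q) (f r)) →
      ∃ τ L, IsTranslation τ ∧ IsLinearMap ℝ L ∧ Function.Bijective L ∧ f = τ ∘ L) ∧
    (∀ (Lg : Language) (str : Lg.Structure Pt),
      (∀ m, IsEmpty (Lg.Functions m)) → ConOf Lg str ColSet →
      ∀ f : Pt → Pt, Function.Bijective f →
        (∀ (m : ℕ) (r : Lg.Relations m) (v : Fin m → Pt),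
          (letI := str; Structure.RelMap r v) ↔ (letI := str; Structure.RelMap r (f ∘ v))) →
        ∃ τ L, IsTranslation τ ∧ IsLinearMap ℝ L ∧ Function.Bijective L ∧ f = τ ∘ L) := by
  constructor
  · exact ColAux.part1
  · intro Lg str hfun hdef f hf hrel
    letI := str
    obtain ⟨φ, hφ⟩ := Set.empty_definable_iff.1 hdef
    let g : Lg.Equiv Pt Pt :=
      { toEquiv := Equiv.ofBijective f hf,
        map_fun' := fun {n} F _ => (hfun n).elim F,
        map_rel' := fun {n} r v => (hrel n r v).symm }
    have hmem : ∀ v : Fin 3 → Pt, Col (v 0) (v 1) (v 2) ↔ φ.Realize v := by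
      intro v
      have := Set.ext_iff.1 hφ v
      exact this
    have hcol : ∀ p q r : Pt, Col p q r ↔ Col (f p) (f q) (f r) := by
      intro p q r
      have h1 : Col p q r ↔ φ.Realize ![p, q, r] := hmem ![p, q, r]
      have h2 : Col (f p) (f q) (f r) ↔ φ.Realize (f ∘ ![p, q, r]) :=
        hmem (f ∘ ![p, q, r])
      have h3 : φ.Realize ((g : Pt → Pt) ∘ ![p, q, r]) ↔ φ.Realize ![p, q, r] :=
        StrongHomClass.realize_formula g φ
      have hgf : (g : Pt → Pt) = f := rfl
      rw [hgf] at h3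
      rw [h1, ← h3, ← h2]
    exact ColAux.part1 f hf hcol
end
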